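/- arXiv:1405.1785 — 5 statements merged into one kernel-verified Lean document; each statement's English description precedes it below -/
import Mathlib

section
/- Let n ≥ 1 and let A = (A_{ij}) be an n×n real matrix whose associated quadratic form is positive definite, i.e. Σ_{i,j} A_{ij} v_i v_j > 0 for every nonzero v ∈ ℝⁿ. If b = (b_1, …, b_n) ∈ ℂⁿ satisfies Σ_{j=1}^n A_{ij} b_i b_j = 0 for every 1 ≤ i ≤ n, then b = 0. In other words, the system of quadratic equations Σ_{j=1}^n A_{ij} x_i x_j = 0 (1 ≤ i ≤ n) has only the trivial solution in ℂⁿ. -/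
/-- If `A` is an `n × n` real matrix whose associated quadratic form is positive definite,
then the system of quadratic equations `∑ j, A i j * x i * x j = 0` (`1 ≤ i ≤ n`) has only
the trivial solution in `ℂ^n`. -/
theorem quadratic_system_only_trivial_solution
    (n : ℕ) (hn : 1 ≤ n) (A : Matrix (Fin n) (Fin n) ℝ)
    (hA : ∀ v : Fin n → ℝ, v ≠ 0 → 0 < ∑ i, ∑ j, A i j * v i * v j)
    (b : Fin n → ℂ) (hb : ∀ i, ∑ j, (A i j : ℂ) * b i * b j = 0) :
    b = 0 := by
  set x : Fin n → ℝ := fun i => (b i).re with hxdef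
  set y : Fin n → ℝ := fun i => (b i).im with hydef
  have key : ∀ i, b i ≠ 0 → ∑ j, (A i j : ℂ) * b j = 0 := by
    intro i hi
    have h : b i * ∑ j, (A i j : ℂ) * b j = 0 := by
      rw [Finset.mul_sum, ← hb i]
      exact Finset.sum_congr rfl fun j _ => by ring
    rcases mul_eq_zero.mp h with h' | h'
    · exact absurd h' hi
    · exact h'
  have hx0 : ∀ i, x i * ∑ j, A i j * x j = 0 := by
    intro i
    by_cases hi : b i = 0
    · simp [hxdef, hi]
    · have h := congrArg Complex.re (key i hi)
      have hre : ∑ j, A i j * x j = 0 := by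
        simpa [Complex.re_sum, hxdef] using h
      rw [hre, mul_zero]
  have hy0 : ∀ i, y i * ∑ j, A i j * y j = 0 := by
    intro i
    by_cases hi : b i = 0
    · simp [hydef, hi]
    · have h := congrArg Complex.im (key i hi)
      have him : ∑ j, A i j * y j = 0 := by
        simpa [Complex.im_sum, hydef] using h
      rw [him, mul_zero]
  have quad : ∀ v : Fin n → ℝ, (∀ i, v i * ∑ j, A i j * v j = 0) → v = 0 := by
    intro v hv
    by_contra hne
    have hpos := hA v hne
    have hz : ∑ i, ∑ j, A i j * v i * v j = 0 := by
      apply Finset.sum_eq_zero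
      intro i _
      calc ∑ j, A i j * v i * v j = v i * ∑ j, A i j * v j := by
            rw [Finset.mul_sum]
            exact Finset.sum_congr rfl fun j _ => by ring
        _ = 0 := hv i
    linarith
  have hxz : x = 0 := quad x hx0
  have hyz : y = 0 := quad y hy0
  funext i
  have h1 : (b i).re = 0 := congrFun hxz i
  have h2 : (b i).im = 0 := congrFun hyz i
  exact Complex.ext h1 h2
end

section
/- Let n ≥ 1 and let A = (A_{ij}) be an n×n real matrix whose associated quadratic form is positive definite, i.e. Σ_{i,j} A_{ij} v_i v_j > 0 for every nonzero v ∈ ℝⁿ. Then the quadratic polynomials f_i := Σ_{j=1}^n A_{ij} x_i x_j (1 ≤ i ≤ n) form a regular sequence in the polynomial ring ℂ[x_1, …, x_n]. -/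
open MvPolynomial



open MvPolynomial RingTheory.Sequence
open scoped Pointwise

section General

variable {R : Type*} [CommRing R]

lemma mem_smul_top {M : Type*} [AddCommGroup M] [Module R M] (r : R) (x : M) :
    x ∈ (r • ⊤ : Submodule R M) ↔ ∃ y, r • y = x := by
  constructor
  · rintro ⟨y, -, rfl⟩; exact ⟨y, rfl⟩
  · rintro ⟨y, rfl⟩; exact ⟨y, trivial, rfl⟩

lemma smul_top_eq_span (r : R) : (r • ⊤ : Submodule R R) = Ideal.span {r} := by
  ext x
  rw [mem_smul_top, Ideal.mem_span_singleton]
  simp [dvd_iff_exists_eq_mul_left, eq_comm, mul_comm, smul_eq_mul]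

/-- If `0 → M' → M → M'' → 0` is exact and `rs` is weakly regular on `M'` and `M''`,
then it is weakly regular on `M`. -/
lemma isWeaklyRegular_of_exact (rs : List R) :
    ∀ {M M' M'' : Type*} [AddCommGroup M] [AddCommGroup M'] [AddCommGroup M'']
    [Module R M] [Module R M'] [Module R M'']
    (f : M' →ₗ[R] M) (g : M →ₗ[R] M''),
    Function.Injective f → Function.Surjective g → Function.Exact f g →
    IsWeaklyRegular M' rs → IsWeaklyRegular M'' rs → IsWeaklyRegular M rs := by
  induction rs with
  | nil => intros; exact .nil _ _
  | cons r rs ih =>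
    intro M M' M'' _ _ _ _ _ _ f g hf hg hfg h' h''
    rw [isWeaklyRegular_cons_iff] at h' h'' ⊢
    obtain ⟨h'1, h'2⟩ := h'
    obtain ⟨h''1, h''2⟩ := h''
    have hreg : IsSMulRegular M r := by
      intro m1 m2 hm
      have h3 : r • (m1 - m2) = 0 := by
        simp only [smul_sub]
        rw [show r • m1 = r • m2 from hm, sub_self]
      have h4 : g (m1 - m2) = 0 := by
        apply h''1
        show r • g (m1 - m2) = r • (0 : M'')
        rw [← map_smul, h3, map_zero, smul_zero]
      obtain ⟨m', hm'⟩ := (hfg (m1 - m2)).mp h4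
      have h5 : f (r • m') = 0 := by rw [map_smul, hm', h3]
      have h6 : r • m' = 0 := hf (by rw [h5, map_zero])
      have h7 : m' = 0 := h'1 (show r • m' = r • (0:M') by rw [h6, smul_zero])
      have h8 : m1 - m2 = 0 := by rw [← hm', h7, map_zero]
      exact sub_eq_zero.mp h8
    refine ⟨hreg, ?_⟩
    have hinj : Function.Injective (QuotSMulTop.map r f) := by
      rw [← LinearMap.ker_eq_bot, LinearMap.ker_eq_bot']
      intro x hx
      obtain ⟨m', rfl⟩ := Submodule.Quotient.mk_surjective _ x
      rw [QuotSMulTop.map_apply_mk, Submodule.Quotient.mk_eq_zero] at hx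
      obtain ⟨m, hm⟩ := (mem_smul_top r (f m')).mp hx
      have h4 : g m = 0 := by
        apply h''1
        show r • g m = r • (0 : M'')
        rw [smul_zero, ← map_smul, hm, (hfg (f m')).mpr ⟨m', rfl⟩]
      obtain ⟨m'', hm''⟩ := (hfg m).mp h4
      have : f (r • m'') = f m' := by rw [map_smul, hm'', hm]
      rw [Submodule.Quotient.mk_eq_zero, ← hf this]
      exact (mem_smul_top r _).mpr ⟨m'', rfl⟩
    exact ih (QuotSMulTop.map r f) (QuotSMulTop.map r g) hinj
      (QuotSMulTop.map_surjective r hg) (QuotSMulTop.map_exact r hfg hg) h'2 h''2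

/-- Product lemma: if `(x :: t)` and `(y :: t)` are regular, so is `(x*y :: t)`. -/
lemma isRegular_mul_cons {x y : R} {t : List R}
    (hx : IsRegular R (x :: t)) (hy : IsRegular R (y :: t)) :
    IsRegular R (x * y :: t) := by
  rw [isRegular_cons_iff] at hx hy ⊢
  obtain ⟨hx1, hx2⟩ := hx
  obtain ⟨hy1, hy2⟩ := hy
  refine ⟨hx1.mul hy1, ?_⟩
  -- SES  0 → R/(y) --*x--> R/(xy) → R/(x) → 0
  have hle1 : (y • ⊤ : Submodule R R) ≤
      Submodule.comap (LinearMap.toSpanSingleton R R x) ((x*y) • ⊤ : Submodule R R) := by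
    intro z hz
    obtain ⟨s, rfl⟩ := (mem_smul_top _ _).mp hz
    refine Submodule.mem_comap.mpr ((mem_smul_top _ _).mpr ⟨s, ?_⟩)
    simp [LinearMap.toSpanSingleton_apply, smul_eq_mul]; ring
  have hle2 : ((x*y) • ⊤ : Submodule R R) ≤
      Submodule.comap (LinearMap.id : R →ₗ[R] R) (x • ⊤ : Submodule R R) := by
    intro z hz
    obtain ⟨s, rfl⟩ := (mem_smul_top _ _).mp hz
    refine Submodule.mem_comap.mpr ((mem_smul_top _ _).mpr ⟨y * s, ?_⟩)
    simp [smul_eq_mul]; ring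
  set f : QuotSMulTop y R →ₗ[R] QuotSMulTop (x*y) R :=
    Submodule.mapQ _ _ (LinearMap.toSpanSingleton R R x) hle1 with hfdef
  set g : QuotSMulTop (x*y) R →ₗ[R] QuotSMulTop x R :=
    Submodule.mapQ _ _ LinearMap.id hle2 with hgdef
  have hf : Function.Injective f := by
    rw [← LinearMap.ker_eq_bot, LinearMap.ker_eq_bot']
    intro z hz
    obtain ⟨p, rfl⟩ := Submodule.Quotient.mk_surjective _ z
    rw [hfdef, Submodule.mapQ_apply, Submodule.Quotient.mk_eq_zero] at hz
    obtain ⟨s, hs⟩ := (mem_smul_top _ _).mp hz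
    rw [Submodule.Quotient.mk_eq_zero]
    refine (mem_smul_top _ _).mpr ⟨s, ?_⟩
    apply hx1
    show x • (y • s) = x • p
    simp only [LinearMap.toSpanSingleton_apply, smul_eq_mul] at hs ⊢
    rw [← mul_assoc, hs, mul_comm]
  have hg : Function.Surjective g := by
    intro z
    obtain ⟨p, rfl⟩ := Submodule.Quotient.mk_surjective _ z
    exact ⟨Submodule.Quotient.mk p, by rw [hgdef, Submodule.mapQ_apply]; rfl⟩
  have hexact : Function.Exact f g := by
    intro z
    obtain ⟨p, rfl⟩ := Submodule.Quotient.mk_surjective _ z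
    constructor
    · intro hz
      rw [hgdef, Submodule.mapQ_apply, LinearMap.id_apply, Submodule.Quotient.mk_eq_zero] at hz
      obtain ⟨s, hs⟩ := (mem_smul_top _ _).mp hz
      refine ⟨Submodule.Quotient.mk s, ?_⟩
      rw [hfdef, Submodule.mapQ_apply]
      congr 1
      simp only [LinearMap.toSpanSingleton_apply, smul_eq_mul] at hs ⊢
      rw [← hs]; ring
    · rintro ⟨w, hw⟩
      obtain ⟨s, rfl⟩ := Submodule.Quotient.mk_surjective _ w
      rw [hfdef, Submodule.mapQ_apply] at hw
      rw [← hw, hgdef, Submodule.mapQ_apply, LinearMap.id_apply, Submodule.Quotient.mk_eq_zero]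
      refine (mem_smul_top _ _).mpr ⟨s, ?_⟩
      simp only [LinearMap.toSpanSingleton_apply, smul_eq_mul]; ring
  constructor
  case toIsWeaklyRegular =>
    exact isWeaklyRegular_of_exact t f g hf hg hexact hy2.toIsWeaklyRegular hx2.toIsWeaklyRegular
  case top_ne_smul =>
    intro htop
    apply hx2.top_ne_smul
    have h1 : Submodule.map g (⊤ : Submodule R (QuotSMulTop (x*y) R)) = ⊤ :=
      Submodule.map_top g ▸ LinearMap.range_eq_top.mpr hg
    have h2 := congrArg (Submodule.map g) htop
    rw [Submodule.map_smul'', h1] at h2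
    exact h2


/-- If `ev : R →+* R'` is surjective with kernel `(ℓ)`, `ℓ` is a nonzerodivisor,
and the image of `t` is regular in `R'`, then `ℓ :: t` is regular in `R`. -/
lemma isRegular_cons_of_ker {R' : Type*} [CommRing R'] (ev : R →+* R')
    (hsurj : Function.Surjective ev) {ℓ : R} (hker : RingHom.ker ev = Ideal.span {ℓ})
    (hreg : IsSMulRegular R ℓ) {t : List R} (h : IsRegular R' (t.map ev)) :
    IsRegular R (ℓ :: t) := by
  rw [isRegular_cons_iff]
  refine ⟨hreg, ?_⟩
  have hsub : (ℓ • ⊤ : Submodule R R) = (RingHom.ker ev : Submodule R R) := by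
    rw [hker]; exact smul_top_eq_span ℓ
  let e1 : QuotSMulTop ℓ R ≃ₗ[R] R ⧸ (RingHom.ker ev) := Submodule.quotEquivOfEq _ _ hsub
  let e2 : (R ⧸ RingHom.ker ev) ≃+* R' := RingHom.quotientKerEquivOfSurjective hsurj
  let E : QuotSMulTop ℓ R ≃+ R' := e1.toAddEquiv.trans e2.toAddEquiv
  have hE : ∀ p : R, E (Submodule.Quotient.mk p) = ev p := by
    intro p
    show e2 (e1 (Submodule.Quotient.mk p)) = ev p
    rw [show e1 (Submodule.Quotient.mk p)
        = (Ideal.Quotient.mk (RingHom.ker ev) p : R ⧸ RingHom.ker ev) from rfl]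
    rw [show e2 (Ideal.Quotient.mk (RingHom.ker ev) p) = RingHom.kerLift ev
        (Ideal.Quotient.mk (RingHom.ker ev) p) from
      RingHom.quotientKerEquivOfRightInverse.apply _ _]
    exact RingHom.kerLift_mk ev p
  have hfa : List.Forall₂ (fun (r : R) (s : R') => ∀ x : QuotSMulTop ℓ R, E (r • x) = s • E x)
      t (t.map ev) := by
    refine List.forall₂_map_right_iff.mpr (List.forall₂_same.mpr fun r _ x => ?_)
    obtain ⟨p, rfl⟩ := Submodule.Quotient.mk_surjective _ x
    rw [← Submodule.Quotient.mk_smul, smul_eq_mul, hE, hE, map_mul, smul_eq_mul]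
  exact (AddEquiv.isRegular_congr hfa).mpr h


end General

open MvPolynomial

noncomputable section LinSubst

/-- The linear form with coefficient vector `v`, as a linear map. -/
def linM (m : ℕ) : (Fin m → ℂ) →ₗ[ℂ] MvPolynomial (Fin m) ℂ where
  toFun v := ∑ j, C (v j) * X j
  map_add' u v := by
    simp only [Pi.add_apply, map_add, add_mul]
    rw [Finset.sum_add_distrib]
  map_smul' c v := by
    simp only [Pi.smul_apply, smul_eq_mul, map_mul, RingHom.id_apply, smul_eq_C_mul,
      Finset.mul_sum, mul_assoc]

lemma linM_apply (m : ℕ) (v : Fin m → ℂ) : linM m v = ∑ j, C (v j) * X j := rfl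

lemma linM_single (m : ℕ) (j : Fin m) : linM m (Pi.single j 1) = X j := by
  rw [linM_apply, Finset.sum_eq_single j]
  · simp
  · intro k _ hk
    rw [Pi.single_eq_of_ne hk, map_zero, zero_mul]
  · simp

lemma coeff_linM (m : ℕ) (v : Fin m → ℂ) (j : Fin m) :
    coeff (Finsupp.single j 1) (linM m v) = v j := by
  rw [linM_apply]
  rw [show coeff (Finsupp.single j 1) (∑ k, C (v k) * X k)
      = ∑ k, coeff (Finsupp.single j 1) (C (v k) * X k) from
    map_sum (MvPolynomial.coeffAddMonoidHom (R := ℂ) _) _ _]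
  rw [Finset.sum_eq_single j]
  · simp [coeff_C_mul, coeff_X']
  · intro k _ hk
    rw [coeff_C_mul, coeff_X', if_neg, mul_zero]
    intro hcon
    exact hk (Finsupp.single_left_injective one_ne_zero hcon)
  · simp

lemma linM_injective (m : ℕ) : Function.Injective (linM m) := by
  intro u v huv
  funext j
  rw [← coeff_linM m u j, ← coeff_linM m v j, huv]

lemma linM_ne_zero {m : ℕ} {v : Fin m → ℂ} (hv : v ≠ 0) : linM m v ≠ 0 := by
  intro hcon
  exact hv (linM_injective m (by rw [hcon, map_zero]))

/-- Substitution along a linear map of coefficient spaces. -/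
def substA {m m' : ℕ} (T : (Fin m → ℂ) →ₗ[ℂ] (Fin m' → ℂ)) :
    MvPolynomial (Fin m) ℂ →ₐ[ℂ] MvPolynomial (Fin m') ℂ :=
  aeval (fun i => linM m' (T (Pi.single i 1)))

lemma substA_X {m m' : ℕ} (T : (Fin m → ℂ) →ₗ[ℂ] (Fin m' → ℂ)) (i : Fin m) :
    substA T (X i) = linM m' (T (Pi.single i 1)) :=
  aeval_X _ _

lemma substA_C {m m' : ℕ} (T : (Fin m → ℂ) →ₗ[ℂ] (Fin m' → ℂ)) (a : ℂ) :
    substA T (C a) = C a :=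
  aeval_C _ _

lemma substA_linM {m m' : ℕ} (T : (Fin m → ℂ) →ₗ[ℂ] (Fin m' → ℂ)) (v : Fin m → ℂ) :
    substA T (linM m v) = linM m' (T v) := by
  conv_rhs => rw [← Finset.univ_sum_single v]
  rw [map_sum, map_sum, linM_apply, map_sum]
  apply Finset.sum_congr rfl
  intro j _
  rw [map_mul, substA_C, substA_X]
  rw [show (Pi.single j (v j) : Fin m → ℂ) = v j • (Pi.single j 1 : Fin m → ℂ) by
    rw [← Pi.single_smul, smul_eq_mul, mul_one]]
  rw [map_smul, map_smul, smul_eq_C_mul]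

lemma substA_comp {m m' m'' : ℕ} (T : (Fin m → ℂ) →ₗ[ℂ] (Fin m' → ℂ))
    (S : (Fin m' → ℂ) →ₗ[ℂ] (Fin m'' → ℂ)) (p : MvPolynomial (Fin m) ℂ) :
    substA S (substA T p) = substA (S ∘ₗ T) p := by
  have : (substA S).comp (substA T) = substA (S ∘ₗ T) := by
    apply MvPolynomial.algHom_ext
    intro i
    simp [substA_X, substA_linM]
  exact DFunLike.congr_fun this p

lemma substA_surjective {m m' : ℕ} (T : (Fin m → ℂ) →ₗ[ℂ] (Fin m' → ℂ))
    (hT : Function.Surjective T) : Function.Surjective (substA T) := by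
  intro p
  induction p using MvPolynomial.induction_on with
  | C a => exact ⟨C a, substA_C T a⟩
  | add p q hp hq =>
    obtain ⟨p', rfl⟩ := hp
    obtain ⟨q', rfl⟩ := hq
    exact ⟨p' + q', map_add _ _ _⟩
  | mul_X p i hp =>
    obtain ⟨p', rfl⟩ := hp
    obtain ⟨w, hw⟩ := hT (Pi.single i 1)
    exact ⟨p' * linM m w, by rw [map_mul, substA_linM, hw, linM_single]⟩

/-- The "forget the first coordinate" linear map on coefficient vectors. -/
def tailT (m : ℕ) : (Fin (m+1) → ℂ) →ₗ[ℂ] (Fin m → ℂ) :=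
  LinearMap.funLeft ℂ ℂ Fin.succ

lemma tailT_apply (m : ℕ) (v : Fin (m+1) → ℂ) (j : Fin m) : tailT m v j = v j.succ := rfl

lemma substA_tailT_X_zero (m : ℕ) : substA (tailT m) (X 0) = 0 := by
  rw [substA_X]
  have : tailT m (Pi.single (0 : Fin (m+1)) 1) = 0 := by
    funext j
    rw [tailT_apply, Pi.single_eq_of_ne (Fin.succ_ne_zero j)]
    rfl
  rw [this, map_zero]

lemma substA_tailT_X_succ (m : ℕ) (k : Fin m) :
    substA (tailT m) (X k.succ) = X k := by
  rw [substA_X]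
  have : tailT m (Pi.single (k.succ : Fin (m+1)) 1) = Pi.single k 1 := by
    funext j
    rw [tailT_apply]
    by_cases hj : j = k
    · subst hj; simp
    · rw [Pi.single_eq_of_ne hj, Pi.single_eq_of_ne (fun hc => hj (Fin.succ_injective m hc))]
  rw [this, linM_single]

lemma ker_substA_tailT (m : ℕ) :
    RingHom.ker (substA (tailT m)).toRingHom = Ideal.span {(X 0 : MvPolynomial (Fin (m+1)) ℂ)} := by
  apply le_antisymm
  · intro p hp
    have hp0 : substA (tailT m) p = 0 := hp
    set s : MvPolynomial (Fin m) ℂ →+* MvPolynomial (Fin (m+1)) ℂ :=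
      (rename (Fin.succ : Fin m → Fin (m+1)) :
        MvPolynomial (Fin m) ℂ →ₐ[ℂ] MvPolynomial (Fin (m+1)) ℂ).toRingHom with hs
    have hcomm : (Ideal.Quotient.mk (Ideal.span {(X 0 : MvPolynomial (Fin (m+1)) ℂ)})).comp
        (s.comp (substA (tailT m)).toRingHom)
        = Ideal.Quotient.mk (Ideal.span {(X 0 : MvPolynomial (Fin (m+1)) ℂ)}) := by
      apply MvPolynomial.ringHom_ext
      · intro a
        simp [hs, substA_C, rename_C]
      · intro i
        induction i using Fin.cases with
        | zero =>
          simp only [RingHom.coe_comp, Function.comp_apply, AlgHom.toRingHom_eq_coe,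
            RingHom.coe_coe, substA_tailT_X_zero, map_zero]
          rw [eq_comm, Ideal.Quotient.eq_zero_iff_mem]
          exact Ideal.subset_span rfl

        | succ k =>
          simp [hs, substA_tailT_X_succ, rename_X]
    have := congrArg (fun f => f p) hcomm
    simp only [RingHom.coe_comp, Function.comp_apply, AlgHom.toRingHom_eq_coe,
      RingHom.coe_coe] at this
    rw [hp0, map_zero, map_zero] at this
    exact Ideal.Quotient.eq_zero_iff_mem.mp this.symm
  · rw [Ideal.span_le, Set.singleton_subset_iff]
    show substA (tailT m) (X 0) = 0
    exact substA_tailT_X_zero m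

end LinSubst

noncomputable section Pivot

/-- Any nonzero vector can be moved to `Pi.single 0 1` by a linear automorphism. -/
lemma exists_pivot {m : ℕ} {u : Fin (m+1) → ℂ} (hu : u ≠ 0) :
    ∃ Q : (Fin (m+1) → ℂ) ≃ₗ[ℂ] (Fin (m+1) → ℂ), Q u = Pi.single 0 1 := by
  obtain ⟨i0, hi0⟩ := Function.ne_iff.mp hu
  simp only [Pi.zero_apply] at hi0
  set π : Equiv.Perm (Fin (m+1)) := Equiv.swap 0 i0 with hπ
  have hπ0 : π 0 = i0 := Equiv.swap_apply_left 0 i0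
  set F : (Fin (m+1) → ℂ) →ₗ[ℂ] (Fin (m+1) → ℂ) :=
    { toFun := fun v j => if j = 0 then v i0 / u i0 else v (π j) - (v i0 / u i0) * u (π j)
      map_add' := by
        intro v w
        funext j
        by_cases hj : j = 0 <;> simp [hj] <;> ring
      map_smul' := by
        intro c v
        funext j
        by_cases hj : j = 0 <;> simp [hj] <;> ring } with hF
  set G : (Fin (m+1) → ℂ) →ₗ[ℂ] (Fin (m+1) → ℂ) :=
    { toFun := fun w k => if k = i0 then w 0 * u i0 else w (π.symm k) + w 0 * u k
      map_add' := by
        intro v w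
        funext k
        by_cases hk : k = i0 <;> simp [hk] <;> ring
      map_smul' := by
        intro c v
        funext k
        by_cases hk : k = i0 <;> simp [hk] <;> ring } with hG
  have hFapp : ∀ v j, F v j = if j = 0 then v i0 / u i0 else v (π j) - (v i0 / u i0) * u (π j) :=
    fun _ _ => rfl
  have hGapp : ∀ w k, G w k = if k = i0 then w 0 * u i0 else w (π.symm k) + w 0 * u k :=
    fun _ _ => rfl
  have hGF : G ∘ₗ F = LinearMap.id := by
    apply LinearMap.ext
    intro v
    funext k
    rw [LinearMap.comp_apply, hGapp, LinearMap.id_apply]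
    by_cases hk : k = i0
    · subst hk
      rw [if_pos rfl, hFapp, if_pos rfl, div_mul_cancel₀ _ hi0]
    · rw [if_neg hk]
      have hne : π.symm k ≠ 0 := by
        intro hc
        exact hk (by rw [← hπ0, ← hc, Equiv.apply_symm_apply])
      rw [hFapp, hFapp, if_neg hne, if_pos rfl, Equiv.apply_symm_apply]
      ring
  have hFG : F ∘ₗ G = LinearMap.id := by
    apply LinearMap.ext
    intro w
    funext j
    rw [LinearMap.comp_apply, hFapp, LinearMap.id_apply]
    by_cases hj : j = 0
    · subst hj
      rw [if_pos rfl, hGapp, if_pos rfl, mul_div_cancel_right₀ _ hi0]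
    · rw [if_neg hj]
      have hne : π j ≠ i0 := fun hc => hj (π.injective (hc.trans hπ0.symm))
      rw [hGapp, hGapp, if_neg hne, if_pos rfl, Equiv.symm_apply_apply,
        mul_div_cancel_right₀ _ hi0]
      ring
  refine ⟨LinearEquiv.ofLinear F G hFG hGF, ?_⟩
  show F u = Pi.single 0 1
  funext j
  rw [hFapp]
  by_cases hj : j = 0
  · subst hj
    rw [if_pos rfl, div_self hi0, Pi.single_eq_same]
  · rw [if_neg hj, div_self hi0, one_mul, sub_self, Pi.single_eq_of_ne hj]

end Pivot

noncomputable section Key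

open MvPolynomial RingTheory.Sequence

/-- Independence descent: modding out the pivot vector preserves independence. -/
lemma indep_descent {r m : ℕ} (Q : (Fin (m+1) → ℂ) ≃ₗ[ℂ] (Fin (m+1) → ℂ))
    {u : Fin (m+1) → ℂ} (hQ : Q u = Pi.single 0 1) {w : Fin r → (Fin (m+1) → ℂ)}
    (h : LinearIndependent ℂ (Fin.cons u w : Fin (r+1) → (Fin (m+1) → ℂ))) :
    LinearIndependent ℂ (fun i => tailT m (Q (w i))) := by
  rw [Fintype.linearIndependent_iff] at h ⊢
  intro g hg
  set y : Fin (m+1) → ℂ := ∑ i, g i • w i with hy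
  have h0 : tailT m (Q y) = 0 := by
    rw [hy, map_sum, map_sum]
    simpa using hg
  have hQy : Q y = (Q y 0) • Q u := by
    rw [hQ]
    funext j
    induction j using Fin.cases with
    | zero => simp
    | succ k =>
      have := congrFun h0 k
      rw [tailT_apply] at this
      rw [this]
      simp [Pi.single_eq_of_ne (Fin.succ_ne_zero k)]
  have hyu : y = (Q y 0) • u := Q.injective (by rw [map_smul]; exact hQy)
  obtain ⟨α, hα⟩ : ∃ α : ℂ, y = α • u := ⟨Q y 0, hyu⟩
  have hcomb : ∑ i : Fin (r+1),
      (Fin.cons (-α) g : Fin (r+1) → ℂ) i • (Fin.cons u w : Fin (r+1) → _) i = 0 := by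
    rw [Fin.sum_univ_succ]
    simp only [Fin.cons_zero, Fin.cons_succ]
    rw [show ∑ i : Fin r, g i • w i = y from hy.symm, hα]
    simp [neg_smul]
  have hall := h _ hcomb
  intro i
  have := hall i.succ
  simpa using this

lemma ker_substA_comb {m : ℕ} (Q : (Fin (m+1) → ℂ) ≃ₗ[ℂ] (Fin (m+1) → ℂ))
    {u : Fin (m+1) → ℂ} (hQ : Q u = Pi.single 0 1) :
    RingHom.ker (substA (tailT m ∘ₗ Q.toLinearMap)).toRingHom
      = Ideal.span {linM (m+1) u} := by
  ext p
  simp only [RingHom.mem_ker, AlgHom.toRingHom_eq_coe, RingHom.coe_coe]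
  have hsplit : substA (tailT m ∘ₗ Q.toLinearMap) p = substA (tailT m) (substA Q.toLinearMap p) :=
    (substA_comp Q.toLinearMap (tailT m) p).symm
  rw [hsplit]
  have h1 : substA (tailT m) (substA Q.toLinearMap p) = 0
      ↔ substA Q.toLinearMap p ∈ Ideal.span {(X 0 : MvPolynomial (Fin (m+1)) ℂ)} := by
    rw [← ker_substA_tailT m, RingHom.mem_ker]
    rfl
  rw [h1, Ideal.mem_span_singleton, Ideal.mem_span_singleton]
  have hX0 : (X 0 : MvPolynomial (Fin (m+1)) ℂ) = substA Q.toLinearMap (linM (m+1) u) := by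
    rw [substA_linM]
    show (X 0 : MvPolynomial (Fin (m+1)) ℂ) = linM (m+1) (Q u)
    rw [hQ, linM_single]
  constructor
  · intro hdvd
    obtain ⟨c, hc⟩ := hdvd
    rw [hX0] at hc
    obtain ⟨c', hc'⟩ := substA_surjective Q.toLinearMap
      (Q.surjective) c
    rw [← hc', ← map_mul] at hc
    have hinjQ : Function.Injective (substA (Q.toLinearMap)) := by
      intro p1 p2 h12
      have := congrArg (substA Q.symm.toLinearMap) h12
      rw [substA_comp, substA_comp] at this
      have hid : (Q.symm.toLinearMap ∘ₗ Q.toLinearMap) = LinearMap.id := by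
        apply LinearMap.ext; intro v; simp
      rw [hid] at this
      have hidA : ∀ q : MvPolynomial (Fin (m+1)) ℂ, substA (LinearMap.id) q = q := by
        intro q
        induction q using MvPolynomial.induction_on with
        | C a => exact substA_C _ a
        | add p q hp hq => rw [map_add, hp, hq]
        | mul_X p i hp =>
          rw [map_mul, hp, substA_X]
          simp [linM_single]
      rwa [hidA, hidA] at this
    exact ⟨c', hinjQ hc⟩
  · rintro ⟨c, rfl⟩
    rw [map_mul, ← hX0]
    exact ⟨_, rfl⟩

/-- The main recursion: products of pairs of linear forms, all of whose selections are
linearly independent, form a regular sequence. -/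
lemma key (r : ℕ) : ∀ {m : ℕ} (a b : Fin r → (Fin m → ℂ)),
    (∀ c : Fin r → Bool, LinearIndependent ℂ (fun i => if c i then a i else b i)) →
    IsRegular (MvPolynomial (Fin m) ℂ) (List.ofFn fun i => linM m (a i) * linM m (b i)) := by
  induction r with
  | zero =>
    intro m a b _
    rw [List.ofFn_zero]
    exact IsRegular.nil _ _
  | succ r ih =>
    intro m a b h
    have haux : ∀ u : Fin m → ℂ,
        (∀ c : Fin r → Bool, LinearIndependent ℂ
          (Fin.cons u (fun i => if c i then a i.succ else b i.succ) : Fin (r+1) → (Fin m → ℂ))) →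
        IsRegular (MvPolynomial (Fin m) ℂ)
          (linM m u :: List.ofFn (fun i : Fin r => linM m (a i.succ) * linM m (b i.succ))) := by
      intro u hu
      have hu0 : u ≠ 0 := by
        have := (hu (fun _ => true)).ne_zero 0
        simpa using this
      have hm : m ≠ 0 := by
        rintro rfl
        exact hu0 (funext fun j => Fin.elim0 j)
      obtain ⟨m', rfl⟩ := Nat.exists_eq_succ_of_ne_zero hm
      · obtain ⟨Q, hQ⟩ := exists_pivot hu0
        set T := tailT m' ∘ₗ Q.toLinearMap with hT
        have hsurjT : Function.Surjective T := by
          intro w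
          obtain ⟨v, hv⟩ := Q.surjective (Fin.cons 0 w)
          refine ⟨v, ?_⟩
          rw [hT, LinearMap.comp_apply]
          show tailT m' (Q v) = w
          rw [hv]
          funext j
          rw [tailT_apply, Fin.cons_succ]
        apply isRegular_cons_of_ker (substA T).toRingHom
          (substA_surjective T hsurjT) (ker_substA_comb Q hQ)
        · -- nonzerodivisor
          intro p q hpq
          have hpq' : linM (m'+1) u * p = linM (m'+1) u * q := by
            simpa [smul_eq_mul] using hpq
          exact mul_left_cancel₀ (linM_ne_zero hu0) hpq'
        · -- image sequence regular, by induction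
          rw [List.map_ofFn]
          have hfn : (⇑(substA T).toRingHom ∘
                fun i : Fin r => linM (m'+1) (a i.succ) * linM (m'+1) (b i.succ))
              = fun i : Fin r => linM m' (T (a i.succ)) * linM m' (T (b i.succ)) := by
            funext i
            show substA T (linM (m'+1) (a i.succ) * linM (m'+1) (b i.succ)) = _
            rw [map_mul, substA_linM, substA_linM]
          rw [hfn]
          apply ih
          intro c
          have hind := indep_descent Q hQ (w := fun i => if c i then a i.succ else b i.succ)
            (hu c)
          have heq : (fun i => tailT m' (Q ((fun i => if c i then a i.succ else b i.succ) i)))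
              = fun i => if c i then T (a i.succ) else T (b i.succ) := by
            funext i
            by_cases hc : c i <;> simp [hc, hT]
          rw [heq] at hind
          exact hind
    have hsplit : (List.ofFn fun i : Fin (r+1) => linM m (a i) * linM m (b i))
        = (linM m (a 0) * linM m (b 0))
          :: List.ofFn (fun i : Fin r => linM m (a i.succ) * linM m (b i.succ)) := by
      rw [List.ofFn_succ]
    rw [hsplit]
    apply isRegular_mul_cons
    · apply haux (a 0)
      intro c
      have heq : (Fin.cons (a 0) (fun i => if c i then a i.succ else b i.succ)
            : Fin (r+1) → (Fin m → ℂ))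
          = fun i => if (Fin.cons true c : Fin (r+1) → Bool) i then a i else b i := by
        funext i
        induction i using Fin.cases with
        | zero => simp
        | succ k => simp
      rw [heq]
      exact h _
    · apply haux (b 0)
      intro c
      have heq : (Fin.cons (b 0) (fun i => if c i then a i.succ else b i.succ)
            : Fin (r+1) → (Fin m → ℂ))
          = fun i => if (Fin.cons false c : Fin (r+1) → Bool) i then a i else b i := by
        funext i
        induction i using Fin.cases with
        | zero => simp
        | succ k => simp
      rw [heq]
      exact h _

end Key

noncomputable section Final

open MvPolynomial RingTheory.Sequence

lemma indep_choice {n : ℕ} (A : Matrix (Fin n) (Fin n) ℝ)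
    (hA : ∀ v : Fin n → ℝ, v ≠ 0 → 0 < ∑ i, ∑ j, A i j * v i * v j) (c : Fin n → Bool) :
    LinearIndependent ℂ (fun i => if c i then (Pi.single i 1 : Fin n → ℂ)
      else (fun j => (A i j : ℂ))) := by
  rw [Fintype.linearIndependent_iff]
  intro g hg
  set w : Fin n → ℂ := fun i => if c i then 0 else g i with hw
  have hco : ∀ jj : Fin n, (if c jj then g jj else 0) + ∑ i, w i * (A i jj : ℂ) = 0 := by
    intro jj
    have h1 := congrFun hg jj
    simp only [Finset.sum_apply, Pi.smul_apply, smul_eq_mul, Pi.zero_apply] at h1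
    have hterm : ∀ i, g i * ((if c i then (Pi.single i 1 : Fin n → ℂ)
          else fun j => (A i j : ℂ)) jj)
        = (if c i then g i * (Pi.single i 1 : Fin n → ℂ) jj else 0) + w i * (A i jj : ℂ) := by
      intro i
      by_cases hci : c i <;> simp [hw, hci]
    simp only [hterm] at h1
    rw [Finset.sum_add_distrib] at h1
    have h4 : ∑ i, (if c i then g i * (Pi.single i 1 : Fin n → ℂ) jj else 0)
        = (if c jj then g jj else 0) := by
      rw [Finset.sum_eq_single jj]
      · by_cases hcjj : c jj <;> simp [hcjj]
      · intro k _ hk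
        by_cases hck : c k <;> simp [hck, Pi.single_eq_of_ne (Ne.symm hk)]
      · simp
    rw [h4] at h1
    exact h1
  have hzero : ∀ v : Fin n → ℝ, (∀ i, c i → v i = 0) →
      (∀ jj, ¬ c jj → ∑ i, v i * A i jj = 0) → v = 0 := by
    intro v hv1 hv2
    by_contra hv
    have hpos := hA v hv
    have hz : ∑ i, ∑ j, A i j * v i * v j = 0 := by
      rw [Finset.sum_comm]
      apply Finset.sum_eq_zero
      intro jj _
      by_cases hc : c jj
      · apply Finset.sum_eq_zero
        intro i _
        rw [hv1 jj hc]
        ring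
      · have heq : ∑ i, A i jj * v i * v jj = (∑ i, v i * A i jj) * v jj := by
          rw [Finset.sum_mul]
          apply Finset.sum_congr rfl
          intros
          ring
        rw [heq, hv2 jj hc, zero_mul]
    rw [hz] at hpos
    exact lt_irrefl 0 hpos
  have hre : ∀ jj, ¬ c jj → ∑ i, (w i).re * A i jj = 0 := by
    intro jj hjj
    have h5 := hco jj
    rw [if_neg hjj, zero_add] at h5
    have h6 := congrArg Complex.re h5
    rw [Complex.re_sum] at h6
    simpa [Complex.mul_re] using h6
  have him : ∀ jj, ¬ c jj → ∑ i, (w i).im * A i jj = 0 := by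
    intro jj hjj
    have h5 := hco jj
    rw [if_neg hjj, zero_add] at h5
    have h6 := congrArg Complex.im h5
    rw [Complex.im_sum] at h6
    simpa [Complex.mul_im] using h6
  have hwre : (fun i => (w i).re) = 0 :=
    hzero _ (fun i hi => by simp [hw, hi]) hre
  have hwim : (fun i => (w i).im) = 0 :=
    hzero _ (fun i hi => by simp [hw, hi]) him
  have hwz : w = 0 := by
    funext i
    exact Complex.ext (congrFun hwre i) (congrFun hwim i)
  intro i
  by_cases hci : c i
  · have h5 := hco i
    rw [if_pos hci] at h5
    have hsum : ∑ i', w i' * (A i' i : ℂ) = 0 := by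
      apply Finset.sum_eq_zero
      intro k _
      rw [show w k = 0 from congrFun hwz k, zero_mul]
    rw [hsum, add_zero] at h5
    exact h5
  · have h5 := congrFun hwz i
    rw [hw] at h5
    simpa [hci] using h5

end Final

/-- If `A` is an `n × n` real matrix whose associated quadratic form is positive definite,
then the quadratic polynomials `f i = ∑ j, C (A i j) * X i * X j` form a regular sequence in
`ℂ[x_1, …, x_n]`. -/
theorem quadrics_isRegular_sequence
    (n : ℕ) (hn : 1 ≤ n) (A : Matrix (Fin n) (Fin n) ℝ)
    (hA : ∀ v : Fin n → ℝ, v ≠ 0 → 0 < ∑ i, ∑ j, A i j * v i * v j) :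
    RingTheory.Sequence.IsRegular (MvPolynomial (Fin n) ℂ)
      (List.ofFn fun i : Fin n => ∑ j, C (A i j : ℂ) * X i * X j) := by
  have hlist : (List.ofFn fun i : Fin n => ∑ j, C (A i j : ℂ) * X i * X j)
      = List.ofFn (fun i => linM n (Pi.single i 1) * linM n (fun j => (A i j : ℂ))) := by
    apply congrArg List.ofFn
    funext i
    rw [linM_single, linM_apply, Finset.mul_sum]
    apply Finset.sum_congr rfl
    intro j _
    ring
  rw [hlist]
  exact key n (fun i => Pi.single i 1) (fun i j => (A i j : ℂ))
    (fun c => indep_choice A hA c)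
end

section
/- Let n ≥ 1 and let A = (A_{ij}) be an n×n real matrix whose associated quadratic form is positive definite, i.e. Σ_{i,j} A_{ij} v_i v_j > 0 for every nonzero v ∈ ℝⁿ. Let J̌ denote the ideal of ℂ[x_1, …, x_n] generated by the quadratic polynomials f_i := Σ_{j=1}^n A_{ij} x_i x_j (1 ≤ i ≤ n). Then the quotient ring ℂ[x_1, …, x_n]/J̌ has dimension 2^n as a ℂ-vector space. -/
open MvPolynomial
namespace PetersonProof
set_option linter.unusedSectionVars false
set_option maxHeartbeats 1000000

variable {ι : Type*} [Fintype ι] [DecidableEq ι]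

/-- Non-zero-divisor modulo an ideal. -/
def NZD {R : Type*} [CommRing R] (a : R) (I : Ideal R) : Prop :=
  ∀ g, a * g ∈ I → g ∈ I

theorem NZD.mul {R : Type*} [CommRing R] {a b : R} {I : Ideal R}
    (ha : NZD a I) (hb : NZD b I) : NZD (a * b) I := by
  intro g hg
  exact hb g (ha _ (by rw [show a * (b * g) = a * b * g by ring]; exact hg))

/-- An ideal all whose members have all homogeneous components in it. -/
def HomI (I : Ideal (MvPolynomial ι ℂ)) : Prop :=
  ∀ p ∈ I, ∀ d, homogeneousComponent d p ∈ I

theorem homogeneousComponent_mul_homogeneous {a : MvPolynomial ι ℂ} {e : ℕ}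
    (ha : a.IsHomogeneous e) (p : MvPolynomial ι ℂ) (d : ℕ) :
    homogeneousComponent (d + e) (a * p) = a * homogeneousComponent d p := by
  conv_lhs => rw [← sum_homogeneousComponent p]
  rw [Finset.mul_sum, map_sum]
  have key : ∀ i, homogeneousComponent (d + e) (a * homogeneousComponent i p)
      = if i = d then a * homogeneousComponent i p else 0 := by
    intro i
    rw [homogeneousComponent_of_mem
      ((mem_homogeneousSubmodule _ _).2 (ha.mul (homogeneousComponent_isHomogeneous i p)))]
    congr 1
    simp only [eq_iff_iff]
    constructor
    · omega
    · omega
  simp only [key]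
  rw [Finset.sum_ite_eq' (Finset.range (p.totalDegree + 1))]
  split_ifs with h
  · rfl
  · rw [homogeneousComponent_eq_zero, mul_zero]
    simp only [Finset.mem_range, not_lt] at h
    omega

theorem homogeneousComponent_mul_homogeneous_zero {a : MvPolynomial ι ℂ} {e : ℕ}
    (ha : a.IsHomogeneous e) (p : MvPolynomial ι ℂ) {d : ℕ} (hd : d < e) :
    homogeneousComponent d (a * p) = 0 := by
  conv_lhs => rw [← sum_homogeneousComponent p]
  rw [Finset.mul_sum, map_sum]
  refine Finset.sum_eq_zero fun i _ => ?_
  rw [homogeneousComponent_of_mem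
    ((mem_homogeneousSubmodule _ _).2 (ha.mul (homogeneousComponent_isHomogeneous i p)))]
  simp only [ite_eq_right_iff]
  intro h
  omega

/-- The span of a set of homogeneous polynomials is a homogeneous ideal. -/
theorem homI_span (S : Set (MvPolynomial ι ℂ)) (hS : ∀ p ∈ S, ∃ e, p.IsHomogeneous e) :
    HomI (Ideal.span S) := by
  intro p hp
  refine Submodule.span_induction (p := fun q _ => ∀ d, homogeneousComponent d q ∈ Ideal.span S)
    ?_ ?_ ?_ ?_ hp
  · intro s hs d
    obtain ⟨e, he⟩ := hS s hs
    rw [homogeneousComponent_of_mem ((mem_homogeneousSubmodule _ _).2 he)]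
    split_ifs
    · exact Ideal.subset_span hs
    · exact zero_mem _
  · intro d; simp
  · intro x y _ _ hx hy d
    rw [map_add]; exact add_mem (hx d) (hy d)
  · intro a x _ hx d
    -- a • x = a * x in a commutative ring viewed as a module over itself
    rw [smul_eq_mul]
    have hax : a * x = ∑ e ∈ Finset.range (a.totalDegree + 1), homogeneousComponent e a * x := by
      rw [← Finset.sum_mul, sum_homogeneousComponent]
    rw [hax, map_sum]
    refine sum_mem fun e _ => ?_
    rcases le_or_gt e d with h | h
    · obtain ⟨d', rfl⟩ := Nat.exists_eq_add_of_le h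
      rw [add_comm e d', homogeneousComponent_mul_homogeneous
        (homogeneousComponent_isHomogeneous e a)]
      exact Ideal.mul_mem_left _ _ (hx d')
    · rw [homogeneousComponent_mul_homogeneous_zero (homogeneousComponent_isHomogeneous e a) _ h]
      exact zero_mem _


/-- every homogeneous component in `I` implies membership. -/
theorem mem_of_forall_component {I : Ideal (MvPolynomial ι ℂ)} {g : MvPolynomial ι ℂ}
    (h : ∀ d, homogeneousComponent d g ∈ I) : g ∈ I := by
  have := sum_mem (t := Finset.range (g.totalDegree + 1)) (fun e _ => h e)
  rwa [sum_homogeneousComponent] at this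

theorem swap_nzd {I : Ideal (MvPolynomial ι ℂ)} (hI : HomI I)
    {a b : MvPolynomial ι ℂ} {da db : ℕ} (ha : a.IsHomogeneous da) (hda : 0 < da)
    (hb : b.IsHomogeneous db)
    (h1 : NZD a I) (h2 : NZD b (I ⊔ Ideal.span {a})) :
    NZD b I ∧ NZD a (I ⊔ Ideal.span {b}) := by
  have main : ∀ dg : ℕ, ∀ g : MvPolynomial ι ℂ, g.IsHomogeneous dg → b * g ∈ I → g ∈ I := by
    intro dg
    induction dg using Nat.strong_induction_on with
    | _ dg IH =>
      intro g hg hbg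
      have hg' : g ∈ I ⊔ Ideal.span {a} :=
        h2 g (Submodule.mem_sup_left hbg)
      rw [Submodule.mem_sup] at hg'
      obtain ⟨p, hp, q, hq, hpq⟩ := hg'
      rw [Ideal.mem_span_singleton] at hq
      obtain ⟨h, rfl⟩ := hq
      -- take degree-dg components
      have hcomp : g = homogeneousComponent dg p + homogeneousComponent dg (a * h) := by
        have := congrArg (homogeneousComponent dg) hpq
        rw [homogeneousComponent_of_mem ((mem_homogeneousSubmodule _ _).2 hg), if_pos rfl,
          map_add] at this
        exact this.symm
      rcases lt_or_ge dg da with hlt | hle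
      · rw [homogeneousComponent_mul_homogeneous_zero ha _ hlt, add_zero] at hcomp
        rw [hcomp]; exact hI p hp dg
      · obtain ⟨d', rfl⟩ := Nat.exists_eq_add_of_le' hle
        rw [homogeneousComponent_mul_homogeneous ha h d'] at hcomp
        set h' := homogeneousComponent d' h with hh'
        have hp' : homogeneousComponent (d' + da) p ∈ I := hI p hp _
        have hbah : b * (a * h') ∈ I := by
          have : b * g - b * homogeneousComponent (d' + da) p = b * (a * h') := by
            rw [hcomp]; ring
          rw [← this]
          exact sub_mem hbg (Ideal.mul_mem_left _ _ hp')
        have hbh : b * h' ∈ I := h1 _ (by rw [show a * (b * h') = b * (a * h') by ring]; exact hbah)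
        have hh : h' ∈ I := IH d' (by omega) h' (homogeneousComponent_isHomogeneous d' h) hbh
        rw [hcomp]
        exact add_mem hp' (Ideal.mul_mem_left _ _ hh)
  constructor
  · intro g hbg
    refine mem_of_forall_component fun d => ?_
    refine main d _ (homogeneousComponent_isHomogeneous d g) ?_
    rw [← homogeneousComponent_mul_homogeneous hb g d]
    exact hI _ hbg _
  · intro g hag
    rw [Submodule.mem_sup] at hag
    obtain ⟨p, hp, q, hq, hpq⟩ := hag
    rw [Ideal.mem_span_singleton] at hq
    obtain ⟨h, rfl⟩ := hq
    have hbh : b * h ∈ I ⊔ Ideal.span {a} := by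
      have : b * h = a * g - p := by rw [← hpq]; ring
      rw [this]
      exact sub_mem (Submodule.mem_sup_right (Ideal.mem_span_singleton.2 ⟨g, rfl⟩))
        (Submodule.mem_sup_left hp)
    have hh := h2 h hbh
    rw [Submodule.mem_sup] at hh
    obtain ⟨p', hp', q', hq', hpq'⟩ := hh
    rw [Ideal.mem_span_singleton] at hq'
    obtain ⟨h', rfl⟩ := hq'
    have key : a * (g - b * h') ∈ I := by
      have : a * (g - b * h') = (p + b * p') := by
        linear_combination -hpq - b * hpq' 
      rw [this]
      exact add_mem hp (Ideal.mul_mem_left _ _ hp')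
    have := h1 _ key
    have hg2 : g = (g - b * h') + b * h' := by ring
    rw [hg2]
    exact Submodule.add_mem _ (Submodule.mem_sup_left this)
      (Submodule.mem_sup_right (Ideal.mem_span_singleton.2 ⟨h', rfl⟩))

/-- Regular sequence over an ideal. -/
def RS (I : Ideal (MvPolynomial ι ℂ)) : List (MvPolynomial ι ℂ) → Prop
  | [] => True
  | a :: l => NZD a I ∧ RS (I ⊔ Ideal.span {a}) l

theorem RS_congr {I I' : Ideal (MvPolynomial ι ℂ)} (h : I = I') (l) : RS I l → RS I' l := by
  subst h; exact id

theorem perm_lemma (S : Set (MvPolynomial ι ℂ)) (hS : ∀ p ∈ S, ∃ e, p.IsHomogeneous e)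
    {a : MvPolynomial ι ℂ} {da : ℕ} (ha : a.IsHomogeneous da) (hda : 0 < da)
    (l : List (MvPolynomial ι ℂ)) (hl : ∀ b ∈ l, ∃ e, b.IsHomogeneous e) :
    RS (Ideal.span S) (a :: l) → RS (Ideal.span S) (l ++ [a]) := by
  induction l generalizing S with
  | nil => exact id
  | cons b t IH =>
    rintro ⟨hNa, hNb, hRS⟩
    obtain ⟨db, hdb⟩ := hl b (by simp)
    obtain ⟨hb1, hb2⟩ := swap_nzd (homI_span S hS) ha hda hdb hNa hNb
    refine ⟨hb1, ?_⟩
    have hspan : Ideal.span S ⊔ Ideal.span {b} = Ideal.span (S ∪ {b}) := by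
      rw [Ideal.span_union]
    refine RS_congr hspan.symm _ ?_
    have : RS (Ideal.span (S ∪ {b})) (a :: t) := by
      constructor
      · exact fun g hg => by
          rw [← hspan] at hg ⊢; exact hb2 g hg
      · refine RS_congr ?_ _ hRS
        rw [Ideal.span_union]
        exact sup_right_comm _ _ _
    have := IH (S ∪ {b})
      (fun p hp => hp.elim (hS p) (fun h => ⟨db, by rwa [Set.mem_singleton_iff.1 h]⟩))
      (fun c hc => hl c (by simp [hc])) this
    exact this

theorem RS_last {I : Ideal (MvPolynomial ι ℂ)} {a : MvPolynomial ι ℂ}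
    (l : List (MvPolynomial ι ℂ)) :
    RS I (l ++ [a]) → NZD a (I ⊔ Ideal.span {x | x ∈ l}) := by
  induction l generalizing I with
  | nil =>
    rintro ⟨h, -⟩
    have he : I ⊔ Ideal.span {x : MvPolynomial ι ℂ | x ∈ ([] : List (MvPolynomial ι ℂ))} = I := by
      simp [Ideal.span_empty]
    rw [he]; exact h
  | cons b t IH =>
    rintro ⟨-, h⟩
    have key := IH h
    have he : I ⊔ Ideal.span {x : MvPolynomial ι ℂ | x ∈ b :: t}
        = I ⊔ Ideal.span {b} ⊔ Ideal.span {x | x ∈ t} := by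
      have : {x : MvPolynomial ι ℂ | x ∈ b :: t} = insert b {x | x ∈ t} := by
        ext x; simp
      rw [this, Ideal.span_insert, sup_assoc]
    rw [he]; exact key


theorem NZD_congr {R : Type*} [CommRing R] {a : R} {I I' : Ideal R} (h : I = I') :
    NZD a I → NZD a I' := by subst h; exact id

section KillVar

variable (c : ι)

/-- substitution killing the variable `c`. -/
noncomputable def killπ (c : ι) : MvPolynomial ι ℂ →ₐ[ℂ] MvPolynomial {i : ι // i ≠ c} ℂ :=
  aeval (fun i => if h : i = c then 0 else X ⟨i, h⟩)

/-- inclusion of the polynomials in the other variables. -/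
noncomputable def killκ (c : ι) : MvPolynomial {i : ι // i ≠ c} ℂ →ₐ[ℂ] MvPolynomial ι ℂ :=
  rename Subtype.val

@[simp] theorem killπ_X_self : killπ c (X c) = 0 := by simp [killπ]

theorem killπ_X_ne {i : ι} (h : i ≠ c) : killπ c (X i) = X ⟨i, h⟩ := by simp [killπ, h]

theorem sub_killκ_killπ_mem (g : MvPolynomial ι ℂ) :
    g - killκ c (killπ c g) ∈ Ideal.span {(X c : MvPolynomial ι ℂ)} := by
  induction g using MvPolynomial.induction_on with
  | C a => simp [killπ, killκ]
  | add p q hp hq =>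
    have : p + q - killκ c (killπ c (p + q))
        = (p - killκ c (killπ c p)) + (q - killκ c (killπ c q)) := by
      rw [map_add, map_add]; ring
    rw [this]; exact add_mem hp hq
  | mul_X p i hp =>
    have : p * X i - killκ c (killπ c (p * X i))
        = (p - killκ c (killπ c p)) * X i
          + killκ c (killπ c p) * (X i - killκ c (killπ c (X i))) := by
      rw [map_mul, map_mul]; ring
    rw [this]
    refine add_mem (Ideal.mul_mem_right _ _ hp) (Ideal.mul_mem_left _ _ ?_)
    by_cases h : i = c
    · subst h
      simp only [killπ_X_self, map_zero, sub_zero]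
      exact Ideal.subset_span rfl
    · rw [killπ_X_ne c h]
      simp [killκ]

theorem nzd_of_kill (F : Set (MvPolynomial ι ℂ)) (a : MvPolynomial ι ℂ)
    (h : NZD (killπ c a) (Ideal.span (killπ c '' F))) :
    NZD a (Ideal.span ({X c} ∪ F)) := by
  intro g hg
  rw [Ideal.span_union] at hg ⊢
  -- image of the hypothesis
  have h1 : killπ c (a * g) ∈ Ideal.span (killπ c '' F) := by
    rw [Submodule.mem_sup] at hg
    obtain ⟨p, hp, q, hq, hpq⟩ := hg
    rw [Ideal.mem_span_singleton] at hp
    obtain ⟨u, rfl⟩ := hp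
    rw [← hpq, map_add, map_mul, killπ_X_self, zero_mul, zero_add]
    have := Ideal.mem_map_of_mem (killπ c).toRingHom hq
    rw [Ideal.map_span] at this
    simpa using this
  rw [map_mul] at h1
  have h2 : killπ c g ∈ Ideal.span (killπ c '' F) := h _ h1
  have h3 : killκ c (killπ c g) ∈ Ideal.span (killκ c '' (killπ c '' F)) := by
    have := Ideal.mem_map_of_mem (killκ c).toRingHom h2
    rw [Ideal.map_span] at this
    simpa using this
  have h4 : Ideal.span (killκ c '' (killπ c '' F))
      ≤ Ideal.span {(X c : MvPolynomial ι ℂ)} ⊔ Ideal.span F := by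
    rw [Ideal.span_le]
    rintro _ ⟨_, ⟨f, hf, rfl⟩, rfl⟩
    have : killκ c (killπ c f) = f - (f - killκ c (killπ c f)) := by ring
    rw [this]
    exact sub_mem (Submodule.mem_sup_right (Ideal.subset_span hf))
      (Submodule.mem_sup_left (sub_killκ_killπ_mem c f))
  have h5 : g = killκ c (killπ c g) + (g - killκ c (killπ c g)) := by ring
  rw [h5]
  exact add_mem (h4 h3) (Submodule.mem_sup_left (sub_killκ_killπ_mem c g))

theorem lift_RS : ∀ (l : List (MvPolynomial ι ℂ)) (F₀ : List (MvPolynomial ι ℂ)),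
    RS (Ideal.span (killπ c '' {x | x ∈ F₀})) (l.map (killπ c)) →
    RS (Ideal.span ({X c} ∪ {x | x ∈ F₀})) l := by
  intro l
  induction l with
  | nil => intro _ _; trivial
  | cons a t IH =>
    rintro F₀ ⟨h1, h2⟩
    constructor
    · exact nzd_of_kill c _ a h1
    · have h2' : RS (Ideal.span (killπ c '' {x | x ∈ a :: F₀})) (t.map (killπ c)) := by
        refine RS_congr ?_ _ h2
        have : {x | x ∈ a :: F₀} = {a} ∪ {x : MvPolynomial ι ℂ | x ∈ F₀} := by ext x; simp
        rw [this, Set.image_union, Set.image_singleton, Ideal.span_union, sup_comm]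
      have := IH (a :: F₀) h2'
      refine RS_congr ?_ _ this
      have : ({X c} ∪ {x | x ∈ a :: F₀} : Set (MvPolynomial ι ℂ))
          = ({X c} ∪ {x | x ∈ F₀}) ∪ {a} := by
        ext x; simp; tauto
      rw [this, Ideal.span_union]

end KillVar

/-- transfer of NZD along an algebra equivalence. -/
theorem NZD_map (φ : MvPolynomial ι ℂ ≃ₐ[ℂ] MvPolynomial ι ℂ) {a : MvPolynomial ι ℂ}
    {I : Ideal (MvPolynomial ι ℂ)} (h : NZD a I) :
    NZD (φ a) (Ideal.map (φ : MvPolynomial ι ℂ →+* MvPolynomial ι ℂ) I) := by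
  intro g hg
  have hsur : Function.Surjective (φ : MvPolynomial ι ℂ →+* MvPolynomial ι ℂ) := φ.surjective
  obtain ⟨g', rfl⟩ := hsur g
  have hg' : φ (a * g') ∈ Ideal.map (φ : MvPolynomial ι ℂ →+* MvPolynomial ι ℂ) I := by
    rw [map_mul]; exact hg
  have hmem : a * g' ∈ I := by
    obtain ⟨x, hx, hφx⟩ := Ideal.mem_map_iff_of_surjective _ hsur |>.1 hg'
    have hx2 : x = a * g' := φ.injective hφx
    rwa [← hx2]
  exact Ideal.mem_map_of_mem _ (h _ hmem)


/-- positive definiteness of the quadratic form of `A`. -/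
def PD (A : ι → ι → ℝ) : Prop :=
  ∀ v : ι → ℝ, v ≠ 0 → 0 < ∑ i, ∑ j, A i j * v i * v j

theorem sum_split {M : Type*} [AddCommMonoid M] (c : ι) (g : ι → M) :
    ∑ i, g i = g c + ∑ i : {j : ι // j ≠ c}, g i.1 := by
  rw [← Finset.add_sum_erase _ g (Finset.mem_univ c)]
  congr 1
  rw [← Finset.sum_subtype (Finset.univ.erase c) (fun x => ?_) (fun i => g i)]
  simp [Finset.mem_erase]

theorem PD.diag {A : ι → ι → ℝ} (hA : PD A) (c : ι) : 0 < A c c := by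
  have hne : (Pi.single c 1 : ι → ℝ) ≠ 0 := by
    intro h
    have := congrFun h c
    simp [Pi.single_eq_same] at this
  have := hA (Pi.single c 1) hne
  simpa [Pi.single_apply, mul_ite, ite_mul, Finset.sum_ite_eq'] using this

theorem PD.restrict {A : ι → ι → ℝ} (hA : PD A) (c : ι) :
    PD (fun i j : {i : ι // i ≠ c} => A i.1 j.1) := by
  intro v hv
  set w : ι → ℝ := fun i => if h : i = c then 0 else v ⟨i, h⟩ with hw
  have hwc : w c = 0 := by simp [hw]
  have hws : ∀ i : {i : ι // i ≠ c}, w i.1 = v i := fun i => by simp [hw, i.2]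
  have hwne : w ≠ 0 := by
    obtain ⟨j, hj⟩ := Function.ne_iff.1 hv
    refine Function.ne_iff.2 ⟨j.1, ?_⟩
    rw [hws]; simpa using hj
  have key : ∑ i, ∑ j, A i j * w i * w j = ∑ i : {i : ι // i ≠ c}, ∑ j : {i : ι // i ≠ c},
      A i.1 j.1 * v i * v j := by
    rw [sum_split c]
    simp only [hwc, mul_zero, zero_mul, Finset.sum_const_zero, zero_add]
    rw [Finset.sum_congr rfl (fun i _ => sum_split c (fun j => A i.1 j * w i.1 * w j))]
    simp only [hwc, mul_zero, zero_add]
    exact Finset.sum_congr rfl fun i _ => Finset.sum_congr rfl fun j _ => by rw [hws, hws]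
  have := hA w hwne
  rwa [key] at this

theorem PD.schur {A : ι → ι → ℝ} (hA : PD A) (c : ι) :
    PD (fun i j : {i : ι // i ≠ c} => A i.1 j.1 - A i.1 c * A c j.1 / A c c) := by
  have hcc : A c c ≠ 0 := ne_of_gt (hA.diag c)
  intro v hv
  set s : ℝ := ∑ j : {i : ι // i ≠ c}, A c j.1 * v j with hs
  set w : ι → ℝ := fun i => if h : i = c then -s / A c c else v ⟨i, h⟩ with hw
  have hwc : w c = -s / A c c := by simp [hw]
  have hws : ∀ i : {i : ι // i ≠ c}, w i.1 = v i := fun i => by simp [hw, i.2]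
  have hwne : w ≠ 0 := by
    obtain ⟨j, hj⟩ := Function.ne_iff.1 hv
    refine Function.ne_iff.2 ⟨j.1, ?_⟩
    rw [hws]; simpa using hj
  have key : ∑ i, ∑ j, A i j * w i * w j
      = ∑ i : {i : ι // i ≠ c}, ∑ j : {i : ι // i ≠ c},
        (A i.1 j.1 - A i.1 c * A c j.1 / A c c) * v i * v j := by
    rw [sum_split c]
    rw [Finset.sum_congr rfl (fun (i : {j : ι // j ≠ c}) _ =>
      sum_split c (fun j => A i.1 j * w i.1 * w j))]
    rw [sum_split c (fun j => A c j * w c * w j)]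
    simp only [hwc, hws]
    rw [Finset.sum_add_distrib]
    have e1 : ∑ j : {i : ι // i ≠ c}, A c j.1 * (-s / A c c) * v j = -s / A c c * s := by
      rw [hs, Finset.mul_sum]
      exact Finset.sum_congr rfl fun j _ => by ring
    have e2 : ∀ i : {i : ι // i ≠ c},
        A i.1 c * v i * (-s / A c c) = (-s / A c c) * (A i.1 c * v i) := fun i => by ring
    rw [e1, ← Finset.sum_mul]
    set t : ℝ := ∑ i : {i : ι // i ≠ c}, A i.1 c * v i with ht
    have expand : ∀ i : {i : ι // i ≠ c}, ∑ j : {i : ι // i ≠ c},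
        (A i.1 j.1 - A i.1 c * A c j.1 / A c c) * v i * v j
        = (∑ j : {i : ι // i ≠ c}, A i.1 j.1 * v i * v j)
          - (A i.1 c * v i) * (s / A c c) := by
      intro i
      have hterm : ∀ j : {i : ι // i ≠ c}, (A i.1 j.1 - A i.1 c * A c j.1 / A c c) * v i * v j
          = A i.1 j.1 * v i * v j - (A i.1 c * v i) * (A c j.1 * v j) / A c c := fun j => by ring
      rw [Finset.sum_congr rfl fun j _ => hterm j, Finset.sum_sub_distrib]
      congr 1
      rw [hs, Finset.sum_div, Finset.mul_sum]
      exact Finset.sum_congr rfl fun j _ => by ring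
    rw [Finset.sum_congr rfl fun (i : {j : ι // j ≠ c}) _ => expand i, Finset.sum_sub_distrib,
      ← Finset.sum_mul, ← ht]
    field_simp
    ring
  have := hA w hwne
  rwa [key] at this


/-- the quadric `f_i`. -/
noncomputable def fC (A : ι → ι → ℝ) (i : ι) : MvPolynomial ι ℂ :=
  ∑ j, C (A i j : ℂ) * X i * X j

/-- the linear form `ℓ_i`. -/
noncomputable def linC (A : ι → ι → ℝ) (i : ι) : MvPolynomial ι ℂ :=
  ∑ j, C (A i j : ℂ) * X j

theorem fC_eq (A : ι → ι → ℝ) (i : ι) : fC A i = X i * linC A i := by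
  rw [fC, linC, Finset.mul_sum]
  exact Finset.sum_congr rfl fun j _ => by ring

theorem linC_homog (A : ι → ι → ℝ) (i : ι) : (linC A i).IsHomogeneous 1 := by
  refine IsHomogeneous.sum _ _ _ fun j _ => ?_
  simpa using ((isHomogeneous_C ι ((A i j : ℂ))).mul (isHomogeneous_X ℂ j))

theorem fC_homog (A : ι → ι → ℝ) (i : ι) : (fC A i).IsHomogeneous 2 := by
  rw [fC_eq]
  simpa using (isHomogeneous_X ℂ i).mul (linC_homog A i)

theorem killπ_fC (A : ι → ι → ℝ) (c : ι) {p : ι} (hp : p ≠ c) :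
    killπ c (fC A p) = fC (fun i j : {i : ι // i ≠ c} => A i.1 j.1) ⟨p, hp⟩ := by
  rw [fC, map_sum, fC]
  rw [sum_split c (fun j => killπ c (C (A p j : ℂ) * X p * X j))]
  have h0 : killπ c (C (A p c : ℂ) * X p * X c) = 0 := by
    rw [map_mul, killπ_X_self, mul_zero]
  rw [h0, zero_add]
  exact Finset.sum_congr rfl fun j _ => by
    rw [map_mul, map_mul, killπ_X_ne c hp, killπ_X_ne c j.2]
    simp [killπ]

section ChangeVar

variable (A : ι → ι → ℝ) (c : ι)

/-- the substitution `X c ↦ (X c - ∑_{j ≠ c} A c j X j) / A c c`. -/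
noncomputable def uvec : ι → MvPolynomial ι ℂ := fun j =>
  if j = c then (X c - ∑ j' : {i : ι // i ≠ c}, C (A c j'.1 : ℂ) * X j'.1) * C ((A c c : ℂ))⁻¹
  else X j

noncomputable def τdown : MvPolynomial ι ℂ →ₐ[ℂ] MvPolynomial ι ℂ := aeval (uvec A c)

theorem τdown_C (r : ℂ) : τdown A c (C r) = C r := by
  rw [τdown, aeval_C, algebraMap_eq]
theorem τdown_X (j : ι) : τdown A c (X j) = uvec A c j := by rw [τdown, aeval_X]

noncomputable def τup : MvPolynomial ι ℂ →ₐ[ℂ] MvPolynomial ι ℂ :=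
  aeval (fun j => if j = c then linC A c else X j)

theorem uvec_homog : ∀ j, (uvec A c j).IsHomogeneous 1 := by
  intro j
  rw [uvec]
  split_ifs
  · have h1 : (X c - ∑ j' : {i : ι // i ≠ c}, C (A c j'.1 : ℂ) * X j'.1
        : MvPolynomial ι ℂ).IsHomogeneous 1 := by
      refine (isHomogeneous_X ℂ c).sub (IsHomogeneous.sum _ _ _ fun j' _ => ?_)
      simpa using ((isHomogeneous_C ι ((A c j'.1 : ℂ))).mul (isHomogeneous_X ℂ j'.1))
    simpa using h1.mul (isHomogeneous_C ι _)
  · exact isHomogeneous_X ℂ j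

/-- key algebraic identity : `linC A c` expands via the `c` term. -/
theorem linC_split : linC A c
    = C (A c c : ℂ) * X c + ∑ j' : {i : ι // i ≠ c}, C (A c j'.1 : ℂ) * X j'.1 := by
  rw [linC, sum_split c (fun j => C (A c j : ℂ) * X j)]

theorem τ_comp_up (h : A c c ≠ 0) : (τdown A c).comp (τup A c) = AlgHom.id ℂ _ := by
  refine MvPolynomial.algHom_ext fun i => ?_
  simp only [AlgHom.comp_apply, AlgHom.id_apply, τup, τdown, aeval_X]
  by_cases hi : i = c
  · rw [hi, if_pos rfl, linC_split, map_add, map_mul, map_sum, aeval_C, aeval_X, uvec, if_pos rfl]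
    have hj : ∀ j' : {i : ι // i ≠ c}, (aeval (uvec A c)) (C (A c j'.1 : ℂ) * X j'.1)
        = C (A c j'.1 : ℂ) * X j'.1 := by
      intro j'
      rw [map_mul, aeval_C, aeval_X, uvec, if_neg j'.2, algebraMap_eq]
    rw [Finset.sum_congr rfl fun j' _ => hj j', algebraMap_eq]
    have hcc : (A c c : ℂ) ≠ 0 := by
      simpa using h
    have h1 : (C ((A c c : ℂ)) : MvPolynomial ι ℂ) * C ((A c c : ℂ))⁻¹ = 1 := by
      rw [← map_mul, mul_inv_cancel₀ hcc, map_one]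
    linear_combination (X c - ∑ x : { i : ι // ¬i = c }, C (A c x.1 : ℂ) * X x.1) * h1
  · rw [if_neg hi, aeval_X, uvec, if_neg hi]

theorem τ_comp_down (h : A c c ≠ 0) : (τup A c).comp (τdown A c) = AlgHom.id ℂ _ := by
  refine MvPolynomial.algHom_ext fun i => ?_
  simp only [AlgHom.comp_apply, AlgHom.id_apply, τup, τdown, aeval_X]
  by_cases hi : i = c
  · rw [hi, uvec, if_pos rfl, map_mul, map_sub, aeval_X, if_pos rfl, map_sum, aeval_C]
    have hj : ∀ j' : {i : ι // i ≠ c}, (aeval fun j => if j = c then linC A c else X j)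
        (C (A c j'.1 : ℂ) * X j'.1) = C (A c j'.1 : ℂ) * X j'.1 := by
      intro j'
      rw [map_mul, aeval_C, aeval_X, if_neg j'.2, algebraMap_eq]
    rw [Finset.sum_congr rfl fun j' _ => hj j', linC_split, algebraMap_eq]
    have hcc : (A c c : ℂ) ≠ 0 := by simpa using h
    have h1 : (C ((A c c : ℂ)) : MvPolynomial ι ℂ) * C ((A c c : ℂ))⁻¹ = 1 := by
      rw [← map_mul, mul_inv_cancel₀ hcc, map_one]
    linear_combination (X c : MvPolynomial ι ℂ) * h1
  · rw [uvec, if_neg hi, aeval_X, if_neg hi]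

/-- the linear change of variables sending `X c` to `linC A c`. -/
noncomputable def chvar (h : A c c ≠ 0) : MvPolynomial ι ℂ ≃ₐ[ℂ] MvPolynomial ι ℂ :=
  AlgEquiv.ofAlgHom (τup A c) (τdown A c) (τ_comp_down A c h) (τ_comp_up A c h)

theorem chvar_apply (h : A c c ≠ 0) (p : MvPolynomial ι ℂ) : chvar A c h p = τup A c p := rfl
theorem chvar_symm_apply (h : A c c ≠ 0) (p : MvPolynomial ι ℂ) :
    (chvar A c h).symm p = τdown A c p := rfl
theorem chvar_X (h : A c c ≠ 0) : chvar A c h (X c) = linC A c := by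
  rw [chvar_apply, τup, aeval_X, if_pos rfl]

theorem τdown_fC {p : ι} (hp : p ≠ c) :
    τdown A c (fC A p) = X p * ∑ j, C (A p j : ℂ) * uvec A c j := by
  rw [fC, map_sum, Finset.mul_sum]
  refine Finset.sum_congr rfl fun j _ => ?_
  rw [map_mul, map_mul, τdown_C, τdown_X, τdown_X, uvec, if_neg hp]
  ring

theorem τdown_fC_homog {p : ι} (hp : p ≠ c) : (τdown A c (fC A p)).IsHomogeneous 2 := by
  rw [τdown_fC A c hp]
  have := (isHomogeneous_X ℂ p).mul
    (IsHomogeneous.sum Finset.univ (fun j => C (A p j : ℂ) * uvec A c j) 1 fun j _ => by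
      simpa using (isHomogeneous_C ι ((A p j : ℂ))).mul (uvec_homog A c j))
  simpa using this

/-- the Schur complement matrix. -/
noncomputable def schurM : {i : ι // i ≠ c} → {i : ι // i ≠ c} → ℝ := fun i j =>
  A i.1 j.1 - A i.1 c * A c j.1 / A c c

theorem killπ_τdown_fC (h : A c c ≠ 0) {p : ι} (hp : p ≠ c) :
    killπ c (τdown A c (fC A p)) = fC (schurM A c) ⟨p, hp⟩ := by
  classical
  set T : MvPolynomial {i : ι // i ≠ c} ℂ :=
    C (A p c : ℂ) * ((- ∑ j' : {i : ι // i ≠ c}, C (A c j'.1 : ℂ) * X j')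
      * C ((A c c : ℂ))⁻¹) with hTdef
  have hterm : ∀ j : ι, killπ c (C (A p j : ℂ) * uvec A c j)
      = if hj : j = c then T else C (A p j : ℂ) * X (⟨j, hj⟩ : {i : ι // i ≠ c}) := by
    intro j
    rw [map_mul]
    have hC : killπ c (C (A p j : ℂ)) = C (A p j : ℂ) := by simp [killπ]
    rw [hC]
    by_cases hj : j = c
    · rw [dif_pos hj, hj, uvec, if_pos rfl, map_mul, map_sub, killπ_X_self, map_sum]
      have hj2 : ∀ j' : {i : ι // i ≠ c}, killπ c (C (A c j'.1 : ℂ) * X j'.1)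
          = C (A c j'.1 : ℂ) * X j' := by
        intro j'
        rw [map_mul, killπ_X_ne c j'.2]
        simp [killπ]
      have hCinv : killπ c (C ((A c c : ℂ))⁻¹) = C ((A c c : ℂ))⁻¹ := by simp [killπ]
      rw [Finset.sum_congr rfl fun j' _ => hj2 j', hCinv, zero_sub, hTdef]
    · rw [dif_neg hj, uvec, if_neg hj, killπ_X_ne c hj]
  rw [τdown_fC A c hp, map_mul, killπ_X_ne c hp, map_sum,
    Finset.sum_congr rfl fun j _ => hterm j,
    sum_split c (fun j => if hj : j = c then T
      else C (A p j : ℂ) * X (⟨j, hj⟩ : {i : ι // i ≠ c})), dif_pos rfl]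
  have hrest : ∀ j : {i : ι // i ≠ c},
      (if hj : j.1 = c then T else C (A p j.1 : ℂ) * X (⟨j.1, hj⟩ : {i : ι // i ≠ c}))
      = C (A p j.1 : ℂ) * X j := by
    intro j
    rw [dif_neg j.2]
  rw [Finset.sum_congr rfl fun j _ => hrest j]
  -- now prove the main identity
  have hT : T = ∑ j : {i : ι // i ≠ c},
      -(C (A p c : ℂ) * C (A c j.1 : ℂ) * C ((A c c : ℂ))⁻¹) * X j := by
    rw [hTdef]
    rw [show (-∑ j' : {i : ι // i ≠ c}, C (A c j'.1 : ℂ) * X j')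
        = ∑ j' : {i : ι // i ≠ c}, -(C (A c j'.1 : ℂ) * X j') from (Finset.sum_neg_distrib _).symm]
    rw [Finset.sum_mul, Finset.mul_sum]
    exact Finset.sum_congr rfl fun j _ => by ring

  rw [hT, ← Finset.sum_add_distrib, Finset.mul_sum, fC]
  refine Finset.sum_congr rfl fun j _ => ?_
  have hcast : ((schurM A c ⟨p, hp⟩ j : ℝ) : ℂ)
      = (A p j.1 : ℂ) - (A p c : ℂ) * (A c j.1 : ℂ) * ((A c c : ℂ))⁻¹ := by
    rw [schurM]
    push_cast [div_eq_mul_inv]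
    ring
  rw [hcast, map_sub, map_mul, map_mul]
  ring

end ChangeVar

theorem NZD_congr_elt {R : Type*} [CommRing R] {a b : R} {I : Ideal R} (h : a = b) :
    NZD a I → NZD b I := by subst h; exact id

theorem NZD_X_bot (c : ι) : NZD (X c : MvPolynomial ι ℂ) ⊥ := by
  intro g hg
  rw [Ideal.mem_bot] at hg ⊢
  rcases mul_eq_zero.1 hg with h | h
  · exact absurd h (X_ne_zero c)
  · exact h

/-- Helper: from a regular sequence in the small ring, `X c` is NZD modulo the span. -/
theorem Xc_nzd_helper (c : ι) (pre : List ι) (G : ι → MvPolynomial ι ℂ)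
    (hG : ∀ p ∈ pre, (G p).IsHomogeneous 2)
    (hsmall : RS (⊥ : Ideal (MvPolynomial {i : ι // i ≠ c} ℂ))
      (pre.map (fun p => killπ c (G p)))) :
    NZD (X c) (Ideal.span (G '' {x | x ∈ pre})) := by
  have h1 : RS (Ideal.span (killπ c '' {x | x ∈ ([] : List (MvPolynomial ι ℂ))}))
      ((pre.map G).map (killπ c)) := by
    refine RS_congr ?_ _ (by rw [List.map_map]; exact hsmall)
    simp [Ideal.span_empty]
  have h2 := lift_RS c (pre.map G) [] h1
  have h3 : RS (Ideal.span (∅ : Set (MvPolynomial ι ℂ))) (X c :: pre.map G) := by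
    constructor
    · refine NZD_congr ?_ (NZD_X_bot c)
      rw [Ideal.span_empty]
    · refine RS_congr ?_ _ h2
      rw [Ideal.span_empty]
      rw [show ({X c} ∪ {x | x ∈ ([] : List (MvPolynomial ι ℂ))} : Set (MvPolynomial ι ℂ))
        = {X c} by simp]
      rw [bot_sup_eq]
  have h4 := perm_lemma ∅ (by simp) (isHomogeneous_X ℂ c) one_pos (pre.map G)
    (fun b hb => by
      obtain ⟨p, hp, rfl⟩ := List.mem_map.1 hb
      exact ⟨2, hG p hp⟩) h3
  have h5 := RS_last (pre.map G) h4
  refine NZD_congr ?_ h5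
  rw [Ideal.span_empty, bot_sup_eq]
  congr 1
  ext x
  simp [List.mem_map]

theorem master : ∀ (N : ℕ) (ι : Type*) [Fintype ι] [DecidableEq ι],
    Fintype.card ι ≤ N → ∀ (A : ι → ι → ℝ), PD A → ∀ (pre post : List ι),
    (pre ++ post).Nodup →
    RS (Ideal.span (fC A '' {x | x ∈ pre})) (post.map (fC A)) := by
  intro N
  induction N using Nat.strong_induction_on with
  | _ N IHN =>
    intro ι _ _ hcard A hA pre post hnodup
    induction post generalizing pre with
    | nil => trivial
    | cons c rest IHpost =>
      have hc_pre : c ∉ pre := by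
        intro hc
        have := hnodup
        rw [List.nodup_append] at this
        exact this.2.2 c hc c (by simp) rfl
      have hpre_ne : ∀ p ∈ pre, p ≠ c := fun p hp h => hc_pre (h ▸ hp)
      have hcard_small : Fintype.card {i : ι // i ≠ c} < N := by
        have h1 : Fintype.card {i : ι // i ≠ c} < Fintype.card ι :=
          Fintype.card_subtype_lt (x := c) (by simp)
        omega
      constructor
      · -- NZD (fC A c) over span of pre
        have hcc : A c c ≠ 0 := ne_of_gt (hA.diag c)
        -- the X c part
        have hX : NZD (X c) (Ideal.span (fC A '' {x | x ∈ pre})) := by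
          refine Xc_nzd_helper c pre (fC A) (fun p _ => fC_homog A p) ?_
          have hlist : pre.map (fun p => killπ c (fC A p))
              = (pre.pmap (fun p hp => (⟨p, hp⟩ : {i : ι // i ≠ c})) hpre_ne).map
                  (fC (fun i j : {i : ι // i ≠ c} => A i.1 j.1)) := by
            rw [List.map_pmap]
            exact ((List.pmap_congr_left pre
              (fun a ha h1 h2 => (killπ_fC A c h1).symm)).trans
              (List.pmap_eq_map hpre_ne)).symm
          rw [hlist]
          have := IHN (Fintype.card {i : ι // i ≠ c}) hcard_small
            {i : ι // i ≠ c} le_rfl (fun i j => A i.1 j.1) (hA.restrict c)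
            [] (pre.pmap (fun p hp => (⟨p, hp⟩ : {i : ι // i ≠ c})) hpre_ne)
            (by
              simp only [List.nil_append]
              refine List.Nodup.pmap (fun a ha b hb h => congrArg Subtype.val h) ?_
              exact (List.nodup_append.1 hnodup).1)
          refine RS_congr ?_ _ this
          simp [Ideal.span_empty]
        -- the linC part
        have hL : NZD (linC A c) (Ideal.span (fC A '' {x | x ∈ pre})) := by
          have hXτ : NZD (X c)
              (Ideal.span ((fun p => τdown A c (fC A p)) '' {x | x ∈ pre})) := by
            refine Xc_nzd_helper c pre _ (fun p hp => τdown_fC_homog A c (hpre_ne p hp)) ?_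
            have hlist : pre.map (fun p => killπ c (τdown A c (fC A p)))
                = (pre.pmap (fun p hp => (⟨p, hp⟩ : {i : ι // i ≠ c})) hpre_ne).map
                    (fC (schurM A c)) := by
              rw [List.map_pmap]
              exact ((List.pmap_congr_left pre
                (fun a ha h1 h2 => (killπ_τdown_fC A c hcc h1).symm)).trans
                (List.pmap_eq_map hpre_ne)).symm
            rw [hlist]
            have := IHN (Fintype.card {i : ι // i ≠ c}) hcard_small
              {i : ι // i ≠ c} le_rfl (schurM A c) (hA.schur c)
              [] (pre.pmap (fun p hp => (⟨p, hp⟩ : {i : ι // i ≠ c})) hpre_ne)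
              (by
                simp only [List.nil_append]
                refine List.Nodup.pmap (fun a ha b hb h => congrArg Subtype.val h) ?_
                exact (List.nodup_append.1 hnodup).1)
            refine RS_congr ?_ _ this
            simp [Ideal.span_empty]
          have htrans := NZD_map (chvar A c hcc) hXτ
          refine NZD_congr ?_ (NZD_congr_elt (chvar_X A c hcc) htrans)
          rw [Ideal.map_span]
          congr 1
          rw [Set.image_image]
          refine Set.image_congr fun p _ => ?_
          show chvar A c hcc (τdown A c (fC A p)) = fC A p
          rw [chvar_apply]
          exact AlgHom.congr_fun (τ_comp_down A c hcc) (fC A p)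
        refine NZD_congr rfl ?_
        rw [fC_eq]
        exact hX.mul hL
      · -- the tail
        have := IHpost (pre ++ [c]) (by
          rwa [List.append_assoc, List.singleton_append])
        refine RS_congr ?_ _ this
        have hset : {x | x ∈ pre ++ [c]} = {x | x ∈ pre} ∪ {c} := by
          ext x; simp [or_comm]
        rw [hset, Set.image_union, Ideal.span_union, Set.image_singleton]

section Dim

open Module

/-- image of polynomials of total degree at most `d` in the quotient. -/
noncomputable def Vd (I : Ideal (MvPolynomial ι ℂ)) (d : ℕ) :
    Submodule ℂ (MvPolynomial ι ℂ ⧸ I) :=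
  Submodule.map (Ideal.Quotient.mkₐ ℂ I).toLinearMap (restrictTotalDegree ι ℂ d)

instance Vd_fd (I : Ideal (MvPolynomial ι ℂ)) (d : ℕ) : FiniteDimensional ℂ (Vd I d) :=
  Module.Finite.map _ _

theorem mem_Vd {I : Ideal (MvPolynomial ι ℂ)} {d : ℕ} {q : MvPolynomial ι ℂ ⧸ I} :
    q ∈ Vd I d ↔ ∃ g : MvPolynomial ι ℂ, g.totalDegree ≤ d ∧ Ideal.Quotient.mk I g = q := by
  constructor
  · rintro ⟨g, hg, rfl⟩
    exact ⟨g, (mem_restrictTotalDegree _ _ _).1 hg, rfl⟩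
  · rintro ⟨g, hg, rfl⟩
    exact ⟨g, (mem_restrictTotalDegree _ _ _).2 hg, rfl⟩

theorem Vd_mono (I : Ideal (MvPolynomial ι ℂ)) {d e : ℕ} (h : d ≤ e) : Vd I d ≤ Vd I e := by
  intro q hq
  obtain ⟨g, hg, rfl⟩ := mem_Vd.1 hq
  exact mem_Vd.2 ⟨g, hg.trans h, rfl⟩

/-- the canonical algebra map between the two quotients. -/
noncomputable def φq (I J : Ideal (MvPolynomial ι ℂ)) (hIJ : I ≤ J) :
    (MvPolynomial ι ℂ ⧸ I) →ₐ[ℂ] (MvPolynomial ι ℂ ⧸ J) :=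
  Ideal.Quotient.liftₐ I (Ideal.Quotient.mkₐ ℂ J) (fun a ha => by
    rw [Ideal.Quotient.mkₐ_eq_mk, Ideal.Quotient.eq_zero_iff_mem]
    exact hIJ ha)

theorem φq_mk (I J : Ideal (MvPolynomial ι ℂ)) (hIJ : I ≤ J) (g : MvPolynomial ι ℂ) :
    φq I J hIJ (Ideal.Quotient.mk I g) = Ideal.Quotient.mk J g := by
  rfl

theorem range_L (I J : Ideal (MvPolynomial ι ℂ)) (hIJ : I ≤ J) (d : ℕ) :
    LinearMap.range ((φq I J hIJ).toLinearMap.comp (Vd I d).subtype) = Vd J d := by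
  ext q
  constructor
  · rintro ⟨⟨x, hx⟩, rfl⟩
    obtain ⟨g, hg, rfl⟩ := mem_Vd.1 hx
    simp only [LinearMap.comp_apply, Submodule.coe_subtype, AlgHom.toLinearMap_apply]
    rw [φq_mk]
    exact mem_Vd.2 ⟨g, hg, rfl⟩
  · rintro hq
    obtain ⟨g, hg, rfl⟩ := mem_Vd.1 hq
    refine ⟨⟨Ideal.Quotient.mk I g, mem_Vd.2 ⟨g, hg, rfl⟩⟩, ?_⟩
    simp only [LinearMap.comp_apply, Submodule.coe_subtype, AlgHom.toLinearMap_apply]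
    rw [φq_mk]

theorem comp_truncation (h : MvPolynomial ι ℂ) (m a : ℕ) :
    homogeneousComponent a (∑ e ∈ Finset.range m, homogeneousComponent e h)
      = if a < m then homogeneousComponent a h else 0 := by
  rw [map_sum]
  have key : ∀ e, homogeneousComponent a (homogeneousComponent e h)
      = if a = e then homogeneousComponent a h else 0 := by
    intro e
    rw [homogeneousComponent_of_mem (homogeneousComponent_mem e h)]
    split_ifs with he
    · rw [he]
    · rfl
  rw [Finset.sum_congr rfl fun e _ => key e, Finset.sum_ite_eq (Finset.range m) a
    (fun _ => homogeneousComponent a h)]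
  simp [Finset.mem_range]

theorem truncation_totalDegree_le (h : MvPolynomial ι ℂ) (d : ℕ) :
    (∑ e ∈ Finset.range (d + 1), homogeneousComponent e h).totalDegree ≤ d := by
  refine (totalDegree_finset_sum _ _).trans ?_
  refine Finset.sup_le fun e he => ?_
  refine ((homogeneousComponent_isHomogeneous e h).totalDegree_le).trans ?_
  simpa using Nat.lt_succ_iff.1 (Finset.mem_range.1 he)

theorem dim_step {I : Ideal (MvPolynomial ι ℂ)} (hI : HomI I) {f : MvPolynomial ι ℂ}
    (hf : f.IsHomogeneous 2) (hnzd : NZD f I) (d : ℕ) :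
    finrank ℂ (Vd (I ⊔ Ideal.span {f}) (d + 2)) + finrank ℂ (Vd I d)
      = finrank ℂ (Vd I (d + 2)) := by
  set J := I ⊔ Ideal.span {f} with hJ
  have hIJ : I ≤ J := le_sup_left
  set L := (φq I J hIJ).toLinearMap.comp (Vd I (d + 2)).subtype with hL
  -- the multiplication map
  set μ : (MvPolynomial ι ℂ ⧸ I) →ₗ[ℂ] (MvPolynomial ι ℂ ⧸ I) :=
    LinearMap.mulLeft ℂ (Ideal.Quotient.mk I f) with hμ
  have μinj : Function.Injective μ := by
    rw [← LinearMap.ker_eq_bot, Submodule.eq_bot_iff]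
    intro x hx
    obtain ⟨g, rfl⟩ := Ideal.Quotient.mk_surjective x
    rw [LinearMap.mem_ker, hμ, LinearMap.mulLeft_apply, ← map_mul,
      Ideal.Quotient.eq_zero_iff_mem] at hx
    rw [Ideal.Quotient.eq_zero_iff_mem]
    exact hnzd g hx
  have hKmap : Submodule.map μ (Vd I d) = Vd I (d + 2) ⊓ LinearMap.ker (φq I J hIJ).toLinearMap
      := by
    ext q
    constructor
    · rintro ⟨x, hx, rfl⟩
      obtain ⟨g, hg, rfl⟩ := mem_Vd.1 hx
      rw [hμ, LinearMap.mulLeft_apply, ← map_mul]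
      constructor
      · refine mem_Vd.2 ⟨f * g, ?_, rfl⟩
        refine (totalDegree_mul f g).trans ?_
        have := hf.totalDegree_le
        omega
      · rw [SetLike.mem_coe, LinearMap.mem_ker, AlgHom.toLinearMap_apply, φq_mk,
          Ideal.Quotient.eq_zero_iff_mem]
        exact Ideal.mul_mem_right _ _ (Submodule.mem_sup_right
          (Ideal.mem_span_singleton.2 dvd_rfl))
    · rintro ⟨hq1, hq2⟩
      obtain ⟨g, hg, rfl⟩ := mem_Vd.1 hq1
      rw [SetLike.mem_coe, LinearMap.mem_ker, AlgHom.toLinearMap_apply, φq_mk,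
        Ideal.Quotient.eq_zero_iff_mem] at hq2
      rw [hJ, Submodule.mem_sup] at hq2
      obtain ⟨p, hp, q', hq', hpq⟩ := hq2
      rw [Ideal.mem_span_singleton] at hq'
      obtain ⟨h, rfl⟩ := hq'
      set h' := ∑ e ∈ Finset.range (d + 1), homogeneousComponent e h with hh'
      have hgI : g - f * h' ∈ I := by
        refine mem_of_forall_component fun e => ?_
        rw [map_sub]
        rcases Nat.lt_or_ge e 2 with he2 | he2
        · -- degree < 2 : the f-terms vanish
          have h1 : homogeneousComponent e (f * h') = 0 :=
            homogeneousComponent_mul_homogeneous_zero hf _ he2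
          have h2 : homogeneousComponent e (f * h) = 0 :=
            homogeneousComponent_mul_homogeneous_zero hf _ he2
          have h3 : homogeneousComponent e g = homogeneousComponent e p := by
            rw [← hpq, map_add, h2, add_zero]
          rw [h1, h3, sub_zero]
          exact hI p hp e
        · obtain ⟨e'', rfl⟩ := Nat.exists_eq_add_of_le' he2
          rw [homogeneousComponent_mul_homogeneous hf h']
          rcases Nat.lt_or_ge e'' (d + 1) with hed | hed
          · have h1 : homogeneousComponent e'' h' = homogeneousComponent e'' h := by
              rw [hh', comp_truncation, if_pos hed]
            have h2 : homogeneousComponent (e'' + 2) g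
                = homogeneousComponent (e'' + 2) p + f * homogeneousComponent e'' h := by
              rw [← hpq, map_add, homogeneousComponent_mul_homogeneous hf h]
            rw [h1, h2]
            have : homogeneousComponent (e'' + 2) p + f * homogeneousComponent e'' h
                - f * homogeneousComponent e'' h = homogeneousComponent (e'' + 2) p := by ring
            rw [this]
            exact hI p hp _
          · have h1 : homogeneousComponent e'' h' = 0 := by
              rw [hh', comp_truncation, if_neg (by omega)]
            have h2 : homogeneousComponent (e'' + 2) g = 0 := by
              refine homogeneousComponent_eq_zero _ g ?_
              omega
            rw [h1, h2, mul_zero, sub_zero]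
            exact zero_mem _
      refine ⟨Ideal.Quotient.mk I h', mem_Vd.2 ⟨h', truncation_totalDegree_le h d, rfl⟩, ?_⟩
      rw [hμ, LinearMap.mulLeft_apply, ← map_mul]
      refine (Ideal.Quotient.eq (I := I)).2 ?_
      rw [← neg_sub]
      exact neg_mem hgI
  have hrk := LinearMap.finrank_range_add_finrank_ker L
  rw [hL, range_L] at hrk
  have hker : LinearMap.ker L = Submodule.comap (Vd I (d + 2)).subtype
      (LinearMap.ker (φq I J hIJ).toLinearMap) := LinearMap.ker_comp _ _
  have h2 : finrank ℂ (LinearMap.ker L) = finrank ℂ (Vd I d) := by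
    rw [show finrank ℂ (LinearMap.ker L)
        = finrank ℂ (Submodule.map (Vd I (d + 2)).subtype (LinearMap.ker L)) from
      (Submodule.finrank_map_subtype_eq (Vd I (d + 2)) _).symm]
    rw [hker, Submodule.map_comap_subtype, ← hKmap]
    exact (LinearEquiv.finrank_eq (Submodule.equivMapOfInjective μ μinj (Vd I d))).symm
  rw [h2] at hrk
  exact hrk

end Dim

open Module

theorem dim_small {I : Ideal (MvPolynomial ι ℂ)} (hI : HomI I) {f : MvPolynomial ι ℂ}
    (hf : f.IsHomogeneous 2) {d : ℕ} (hd : d ≤ 1) :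
    finrank ℂ (Vd (I ⊔ Ideal.span {f}) d) = finrank ℂ (Vd I d) := by
  set J := I ⊔ Ideal.span {f} with hJ
  have hIJ : I ≤ J := le_sup_left
  set L := (φq I J hIJ).toLinearMap.comp (Vd I d).subtype with hL
  have hker : LinearMap.ker L = ⊥ := by
    rw [Submodule.eq_bot_iff]
    rintro ⟨x, hx⟩ hxk
    obtain ⟨g, hg, rfl⟩ := mem_Vd.1 hx
    rw [LinearMap.mem_ker, hL, LinearMap.comp_apply] at hxk
    simp only [Submodule.coe_subtype, AlgHom.toLinearMap_apply] at hxk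
    rw [φq_mk, Ideal.Quotient.eq_zero_iff_mem, hJ, Submodule.mem_sup] at hxk
    obtain ⟨p, hp, q', hq', hpq⟩ := hxk
    rw [Ideal.mem_span_singleton] at hq'
    obtain ⟨h, rfl⟩ := hq'
    have hgmem : g ∈ I := by
      refine mem_of_forall_component fun e => ?_
      rcases Nat.lt_or_ge e 2 with he | he
      · have h2 : homogeneousComponent e (f * h) = 0 :=
          homogeneousComponent_mul_homogeneous_zero hf _ he
        have h3 : homogeneousComponent e g = homogeneousComponent e p := by
          rw [← hpq, map_add, h2, add_zero]
        rw [h3]; exact hI p hp e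
      · rw [homogeneousComponent_eq_zero e g (by omega)]
        exact zero_mem _
    have hz : Ideal.Quotient.mk I g = 0 := by
      rw [Ideal.Quotient.eq_zero_iff_mem]; exact hgmem
    exact Subtype.ext hz
  have hrk := LinearMap.finrank_range_add_finrank_ker L
  rw [hL, range_L, hker, finrank_bot, add_zero] at hrk
  exact hrk

theorem dim_bot (d : ℕ) : finrank ℂ (Vd (⊥ : Ideal (MvPolynomial ι ℂ)) d)
    = finrank ℂ (restrictTotalDegree ι ℂ d) := by
  have hinj : Function.Injective
      (Ideal.Quotient.mkₐ ℂ (⊥ : Ideal (MvPolynomial ι ℂ))).toLinearMap := by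
    intro a b hab
    have h1 : Ideal.Quotient.mk (⊥ : Ideal (MvPolynomial ι ℂ)) a = Ideal.Quotient.mk ⊥ b := hab
    have h2 : a - b ∈ (⊥ : Ideal (MvPolynomial ι ℂ)) := Ideal.Quotient.eq.1 h1
    rw [Ideal.mem_bot, sub_eq_zero] at h2
    exact h2
  exact (LinearEquiv.finrank_eq
    (Submodule.equivMapOfInjective _ hinj (restrictTotalDegree ι ℂ d))).symm

/-- monomials of degree at most `d`, squarefree in the first `k` variables. -/
def SqSet (n k d : ℕ) : Set (Fin n →₀ ℕ) :=
  {s | (s.sum fun _ e => e) ≤ d ∧ ∀ i : Fin n, i.1 < k → s i ≤ 1}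

theorem le_fsum {n : ℕ} (s : Fin n →₀ ℕ) (i : Fin n) : s i ≤ s.sum fun _ e => e := by
  by_cases h : s i = 0
  · simp [h]
  · exact Finset.single_le_sum (fun j _ => Nat.zero_le _) (Finsupp.mem_support_iff.2 h)

theorem sqset_finite (n k d : ℕ) : (SqSet n k d).Finite := by
  have h1 : ({f : Fin n →₀ ℕ | ∀ a, f a ≤ d} : Set _).Finite :=
    (Set.Finite.pi' fun _ => Set.finite_le_nat d).preimage DFunLike.coe_injective.injOn
  exact h1.subset fun s hs i => (le_fsum s i).trans hs.1

theorem sqset_zero (n d : ℕ) : SqSet n 0 d = {s | (s.sum fun _ e => e) ≤ d} := by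
  ext s; simp [SqSet]

theorem sqset_succ_subset (n k d : ℕ) : SqSet n (k + 1) d ⊆ SqSet n k d :=
  fun s hs => ⟨hs.1, fun i hi => hs.2 i (by omega)⟩

theorem sqset_small (n k : ℕ) {d : ℕ} (hd : d ≤ 1) : SqSet n (k + 1) d = SqSet n k d := by
  refine le_antisymm (sqset_succ_subset n k d) fun s hs => ⟨hs.1, fun i hi => ?_⟩
  rcases Nat.lt_or_ge i.1 k with h | h
  · exact hs.2 i h
  · exact (le_fsum s i).trans (hs.1.trans hd)

theorem sqset_rec (n k d : ℕ) (hk : k < n) :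
    (SqSet n k (d + 2)).ncard = (SqSet n (k + 1) (d + 2)).ncard + (SqSet n k d).ncard := by
  classical
  set c : Fin n := ⟨k, hk⟩ with hc
  have hcval : (c : ℕ) = k := rfl
  set B := SqSet n (k + 1) (d + 2) with hB
  set C := {s ∈ SqSet n k (d + 2) | 2 ≤ s c} with hC
  have hunion : SqSet n k (d + 2) = B ∪ C := by
    ext s
    constructor
    · intro hs
      rcases Nat.lt_or_ge (s c) 2 with h | h
      · refine Or.inl ⟨hs.1, fun i hi => ?_⟩
        rcases Nat.lt_or_ge i.1 k with h' | h'
        · exact hs.2 i h'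
        · have hic : i = c := Fin.ext (by rw [hcval]; omega)
          rw [hic]; omega
      · exact Or.inr ⟨hs, h⟩
    · rintro (hs | hs)
      · exact sqset_succ_subset n k _ hs
      · exact hs.1
  have hdisj : Disjoint B C := by
    rw [Set.disjoint_iff_inter_eq_empty]
    ext s
    simp only [Set.mem_inter_iff, Set.mem_empty_iff_false, iff_false]
    rintro ⟨hsB, hsC⟩
    have := hsB.2 c (by rw [hcval]; omega)
    have := hsC.2
    omega
  have hCcard : C.ncard = (SqSet n k d).ncard := by
    have himg : C = (fun s => s + Finsupp.single c 2) '' SqSet n k d := by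
      ext s'
      constructor
      · rintro ⟨hs', h2⟩
        refine ⟨s' - Finsupp.single c 2, ⟨?_, ?_⟩, ?_⟩
        · -- sum bound
          have hsub : (s' - Finsupp.single c 2) + Finsupp.single c 2 = s' := by
            ext i
            rw [Finsupp.add_apply, Finsupp.tsub_apply]
            by_cases h : i = c
            · subst h; simp; omega
            · simp [Finsupp.single_apply, Ne.symm h]
          have hsum := congrArg (fun t => t.sum fun _ e => e) hsub
          rw [Finsupp.sum_add_index' (fun _ => rfl) (fun _ _ _ => rfl)] at hsum
          simp only [Finsupp.sum_single_index] at hsum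
          have := hs'.1
          omega
        · intro i hi
          rw [Finsupp.tsub_apply]
          exact le_trans (Nat.sub_le _ _) (hs'.2 i hi)
        · ext i
          rw [Finsupp.add_apply, Finsupp.tsub_apply]
          by_cases h : i = c
          · subst h; simp; omega
          · simp [Finsupp.single_apply, Ne.symm h]
      · rintro ⟨s, hs, rfl⟩
        have hsum : ((s + Finsupp.single c 2).sum fun _ e => e) = (s.sum fun _ e => e) + 2 := by
          rw [Finsupp.sum_add_index' (fun _ => rfl) (fun _ _ _ => rfl)]
          simp
        refine ⟨⟨by rw [hsum]; have := hs.1; omega, fun i hi => ?_⟩, ?_⟩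
        · rw [Finsupp.add_apply]
          have : i ≠ c := by
            intro h; rw [h, hcval] at hi; omega
          rw [Finsupp.single_apply, if_neg (Ne.symm this)]
          simpa using hs.2 i hi
        · rw [Finsupp.add_apply]
          simp
      
    rw [himg, Set.ncard_image_of_injective _ (add_left_injective _)]
  rw [hunion, Set.ncard_union_eq hdisj (sqset_finite n (k+1) (d+2))
    ((sqset_finite n k (d+2)).subset (Set.sep_subset _ _)), hCcard]

theorem sqset_full (n : ℕ) {d : ℕ} (hd : n ≤ d) : (SqSet n n d).ncard = 2 ^ n := by
  classical
  have heq : SqSet n n d = {s : Fin n →₀ ℕ | ∀ i, s i ≤ 1} := by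
    ext s
    constructor
    · exact fun hs i => hs.2 i i.2
    · intro hs
      refine ⟨?_, fun i _ => hs i⟩
      have h1 : (s.sum fun _ e => e) ≤ s.support.card := by
        refine le_trans (Finset.sum_le_sum fun i _ => hs i) (by simp)
      have h2 : s.support.card ≤ n := by
        simpa using Finset.card_le_card (Finset.subset_univ s.support)
      omega
  rw [heq]
  have e : {s : Fin n →₀ ℕ | ∀ i, s i ≤ 1} ≃ (Fin n → Fin 2) :=
    { toFun := fun s i => ⟨s.1 i, by have := s.2 i; omega⟩
      invFun := fun f => ⟨Finsupp.equivFunOnFinite.symm (fun i => (f i : ℕ)),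
        fun i => by
          have := (f i).2
          simp [Finsupp.equivFunOnFinite]
          omega⟩
      left_inv := fun s => by
        ext i
        simp [Finsupp.equivFunOnFinite]
      right_inv := fun f => by
        ext i
        simp [Finsupp.equivFunOnFinite] }
  rw [show ({s : Fin n →₀ ℕ | ∀ i, s i ≤ 1} : Set _).ncard
    = Nat.card {s : Fin n →₀ ℕ | ∀ i, s i ≤ 1} from rfl]
  rw [Nat.card_congr e, Nat.card_eq_fintype_card]
  simp

theorem finrank_Td (n d : ℕ) :
    finrank ℂ (restrictTotalDegree (Fin n) ℂ d) = (SqSet n 0 d).ncard := by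
  rw [sqset_zero]
  have hfin : ({s : Fin n →₀ ℕ | (s.sum fun _ e => e) ≤ d}).Finite := by
    have := sqset_finite n 0 d
    rwa [sqset_zero] at this
  have : Finite ({s : Fin n →₀ ℕ | (s.sum fun _ e => e) ≤ d}) := hfin.to_subtype
  have fin : Fintype ({s : Fin n →₀ ℕ | (s.sum fun _ e => e) ≤ d}) := Fintype.ofFinite _
  rw [show restrictTotalDegree (Fin n) ℂ d
    = restrictSupport ℂ {s : Fin n →₀ ℕ | (s.sum fun _ e => e) ≤ d} from rfl]
  rw [finrank_eq_card_basis (basisRestrictSupport ℂ _)]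
  rw [show ({s : Fin n →₀ ℕ | (s.sum fun _ e => e) ≤ d} : Set _).ncard
    = Nat.card {s : Fin n →₀ ℕ | (s.sum fun _ e => e) ≤ d} from rfl,
    Nat.card_eq_fintype_card]


end PetersonProof

set_option maxHeartbeats 2000000 in
open PetersonProof in
/-- If `A` is an `n × n` real matrix whose associated quadratic form is positive definite,
then `ℂ[x_1, …, x_n] / (f_1, …, f_n)`, where `f i = ∑ j, A i j * x i * x j`, has dimension
`2 ^ n` as a `ℂ`-vector space. -/
theorem finrank_quotient_quadrics_eq_two_pow
    (n : ℕ) (hn : 1 ≤ n) (A : Matrix (Fin n) (Fin n) ℝ)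
    (hA : ∀ v : Fin n → ℝ, v ≠ 0 → 0 < ∑ i, ∑ j, A i j * v i * v j)
    (J : Ideal (MvPolynomial (Fin n) ℂ))
    (hJ : J = Ideal.span (Set.range fun i : Fin n => ∑ j, C (A i j : ℂ) * X i * X j)) :
    Module.finrank ℂ (MvPolynomial (Fin n) ℂ ⧸ J) = 2 ^ n := by
  classical
  set A' : Fin n → Fin n → ℝ := fun i j => A i j with hA'
  have hPD : PD A' := hA
  set Ik : ℕ → Ideal (MvPolynomial (Fin n) ℂ) :=
    fun k => Ideal.span (fC A' '' {i : Fin n | i.1 < k}) with hIk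
  have hJn : J = Ik n := by
    rw [hJ, hIk]
    congr 1
    rw [show {i : Fin n | i.1 < n} = Set.univ from by ext i; simp [i.2], Set.image_univ]
    rfl
  have hHomI : ∀ k, HomI (Ik k) := by
    intro k
    refine homI_span _ ?_
    rintro p ⟨i, -, rfl⟩
    exact ⟨2, fC_homog A' i⟩
  have htake : ∀ k, {x : Fin n | x ∈ (List.finRange n).take k} = {i : Fin n | i.1 < k} := by
    intro k
    ext x
    simp only [Set.mem_setOf_eq]
    constructor
    · intro hx
      obtain ⟨i, hi, hget⟩ := List.mem_iff_getElem.1 hx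
      rw [List.getElem_take] at hget
      rw [List.length_take] at hi
      rw [List.getElem_finRange] at hget
      subst hget
      simp at hi ⊢
      omega
    · intro hx
      refine List.mem_iff_getElem.2 ⟨x.1, ?_, ?_⟩
      · simp
        omega
      · rw [List.getElem_take, List.getElem_finRange]
        simp [Fin.cast]
  have hnzd : ∀ (k : ℕ) (hk : k < n), NZD (fC A' ⟨k, hk⟩) (Ik k) := by
    intro k hk
    have hm := master n (Fin n) (by simp) A' hPD ((List.finRange n).take k)
      ((List.finRange n).drop k)
      (by rw [List.take_append_drop]; exact List.nodup_finRange n)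
    rw [List.drop_eq_getElem_cons (by simpa using hk), List.map_cons] at hm
    obtain ⟨h1, -⟩ := hm
    refine NZD_congr ?_ (NZD_congr_elt ?_ h1)
    · rw [hIk, htake k]
    · congr 1
      simp [List.getElem_finRange, Fin.cast]
  have chain : ∀ k, k ≤ n → ∀ d, Module.finrank ℂ (Vd (Ik k) d) = (SqSet n k d).ncard := by
    intro k
    induction k with
    | zero =>
      intro _ d
      have h0 : Ik 0 = ⊥ := by
        simp only [hIk]
        rw [show {i : Fin n | i.1 < 0} = (∅ : Set (Fin n)) from by ext i; simp,
          Set.image_empty, Ideal.span_empty]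
      rw [h0, dim_bot, finrank_Td]
    | succ k IH =>
      intro hk1 d
      have hk : k < n := by omega
      have hIkS : Ik (k + 1) = Ik k ⊔ Ideal.span {fC A' ⟨k, hk⟩} := by
        simp only [hIk]
        have hset : {i : Fin n | i.1 < k + 1} = insert (⟨k, hk⟩ : Fin n) {i : Fin n | i.1 < k}
            := by
          ext i
          simp only [Set.mem_setOf_eq, Set.mem_insert_iff]
          constructor
          · intro hi
            rcases Nat.lt_or_ge i.1 k with h | h
            · exact Or.inr h
            · exact Or.inl (Fin.ext (show i.1 = k by omega))
          · rintro (rfl | hi)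
            · simp
            · omega
        rw [hset, Set.image_insert_eq, Ideal.span_insert, sup_comm]
      rcases Nat.lt_or_ge d 2 with hd | hd
      · have hd1 : d ≤ 1 := by omega
        rw [hIkS, dim_small (hHomI k) (fC_homog A' _) hd1, IH (by omega) d, sqset_small n k hd1]
      · obtain ⟨d', rfl⟩ := Nat.exists_eq_add_of_le' hd
        have hstep := dim_step (hHomI k) (fC_homog A' ⟨k, hk⟩) (hnzd k hk) d'
        rw [← hIkS] at hstep
        have e1 := IH (by omega) d'
        have e2 := IH (by omega) (d' + 2)
        have e3 := sqset_rec n k d' hk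
        omega
  have h2n : ∀ d, n ≤ d → Module.finrank ℂ (Vd (Ik n) d) = 2 ^ n := by
    intro d hd
    rw [chain n le_rfl d, sqset_full n hd]
  have hstab : ∀ d, n ≤ d → Vd (Ik n) d = Vd (Ik n) n := by
    intro d hd
    refine (Submodule.eq_of_le_of_finrank_le (Vd_mono _ hd) ?_).symm
    rw [h2n d hd, h2n n le_rfl]
  have htop : (⊤ : Submodule ℂ (MvPolynomial (Fin n) ℂ ⧸ Ik n)) = Vd (Ik n) n := by
    refine le_antisymm ?_ le_top
    intro q _
    obtain ⟨g, rfl⟩ := Ideal.Quotient.mk_surjective q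
    have hmem : Ideal.Quotient.mk (Ik n) g ∈ Vd (Ik n) (max n g.totalDegree) :=
      mem_Vd.2 ⟨g, le_max_right _ _, rfl⟩
    rwa [hstab _ (le_max_left _ _)] at hmem
  rw [hJn, ← finrank_top ℂ (MvPolynomial (Fin n) ℂ ⧸ Ik n), htop, h2n n le_rfl]
end

section
/- Let n ≥ 1 and let A = (A_{ij}) be an n×n matrix with integer entries whose associated real quadratic form is positive definite, i.e. Σ_{i,j} A_{ij} v_i v_j > 0 for every nonzero v ∈ ℝⁿ. Let J̌_ℚ denote the ideal of ℚ[x_1, …, x_n] generated by the quadratic polynomials f_i := Σ_{j=1}^n A_{ij} x_i x_j (1 ≤ i ≤ n). Then the images under the quotient map of the 2^n square-free monomials ∏_{i ∈ K} x_i, indexed by the subsets K ⊆ {1, …, n}, form a basis of ℚ[x_1, …, x_n]/J̌_ℚ as a ℚ-vector space; in particular this quotient has ℚ-dimension 2^n. -/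
open MvPolynomial

namespace PetAux


variable {n : ℕ}

/-- Any principal submatrix of an anisotropic matrix has a two-sided "inverse on `T`". -/
theorem exists_inv (M : Matrix (Fin n) (Fin n) ℚ)
    (hM : ∀ v : Fin n → ℚ, v ≠ 0 → ∑ i, ∑ j, M i j * v i * v j ≠ 0)
    (T : Finset (Fin n)) :
    ∃ Cm : Matrix (Fin n) (Fin n) ℚ,
      (∀ k ∈ T, ∀ j ∈ T, ∑ i ∈ T, Cm k i * M i j = if k = j then 1 else 0) ∧
      (∀ k ∈ T, ∀ j ∈ T, ∑ i ∈ T, M k i * Cm i j = if k = j then 1 else 0) := by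
  classical
  set B : Matrix T T ℚ := fun i j => M i.1 j.1 with hB
  have hdet : B.det ≠ 0 := by
    intro h0
    obtain ⟨v, hv, hBv⟩ := (Matrix.exists_mulVec_eq_zero_iff).2 h0
    set w : Fin n → ℚ := fun i => if h : i ∈ T then v ⟨i, h⟩ else 0 with hw
    have hwne : w ≠ 0 := by
      intro hw0
      apply hv
      funext i
      have := congrFun hw0 i.1
      simpa [hw, i.2] using this
    apply hM w hwne
    have hrow : ∀ i : Fin n, ∑ j, M i j * w i * w j = w i * ∑ j ∈ T, M i j * w j := by
      intro i
      rw [Finset.mul_sum]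
      rw [← Finset.sum_subset (Finset.subset_univ T)]
      · apply Finset.sum_congr rfl; intro j _; ring
      · intro j _ hj
        simp [hw, hj]
    calc ∑ i, ∑ j, M i j * w i * w j = ∑ i, w i * ∑ j ∈ T, M i j * w j := by
          exact Finset.sum_congr rfl fun i _ => hrow i
      _ = ∑ i ∈ T, w i * ∑ j ∈ T, M i j * w j := by
          rw [← Finset.sum_subset (Finset.subset_univ T)]
          intro i _ hi; simp [hw, hi]
      _ = 0 := by
          rw [Finset.sum_eq_zero]
          intro i hi
          have : ∑ j ∈ T, M i j * w j = B.mulVec v ⟨i, hi⟩ := by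
            rw [Matrix.mulVec, dotProduct]
            rw [← Finset.sum_attach T fun j => M i j * w j]
            apply Finset.sum_congr rfl
            intro j _
            simp [hB, hw, j.2]
          rw [this, hBv]
          simp
  have hunit : IsUnit B.det := isUnit_iff_ne_zero.2 hdet
  set Cm : Matrix (Fin n) (Fin n) ℚ := fun k i =>
    if h : k ∈ T ∧ i ∈ T then B⁻¹ ⟨k, h.1⟩ ⟨i, h.2⟩ else 0 with hCm
  refine ⟨Cm, ?_, ?_⟩
  · intro k hk j hj
    have h1 : (B⁻¹ * B) ⟨k, hk⟩ ⟨j, hj⟩ = if k = j then 1 else 0 := by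
      rw [Matrix.nonsing_inv_mul B hunit]
      simp [Matrix.one_apply, Subtype.ext_iff]
    rw [← h1, Matrix.mul_apply]
    rw [← Finset.sum_attach T fun i => Cm k i * M i j]
    apply Fintype.sum_congr
    intro i
    simp [hCm, hB, hk, i.2]
  · intro k hk j hj
    have h1 : (B * B⁻¹) ⟨k, hk⟩ ⟨j, hj⟩ = if k = j then 1 else 0 := by
      rw [Matrix.mul_nonsing_inv B hunit]
      simp [Matrix.one_apply, Subtype.ext_iff]
    rw [← h1, Matrix.mul_apply]
    rw [← Finset.sum_attach T fun i => M k i * Cm i j]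
    apply Fintype.sum_congr
    intro i
    simp [hCm, hB, hj, i.2]



variable {n : ℕ}

noncomputable def sq (K : Finset (Fin n)) : MvPolynomial (Fin n) ℚ := ∏ i ∈ K, X i

noncomputable def eK (K : Finset (Fin n)) : Fin n →₀ ℕ := ∑ i ∈ K, Finsupp.single i 1

theorem degE_add (u v : Fin n →₀ ℕ) : (u + v).degree = u.degree + v.degree := by
  simp only [Finsupp.degree_eq_weight_one]
  exact map_add _ u v

theorem degE_single (i : Fin n) : (Finsupp.single i 1 : Fin n →₀ ℕ).degree = 1 := by
  rw [Finsupp.degree_apply, Finsupp.support_single_ne_zero i one_ne_zero]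
  simp

theorem sq_eq (K : Finset (Fin n)) : sq K = monomial (eK K) 1 := by
  classical
  induction K using Finset.induction_on with
  | empty => simp [sq, eK, monomial_zero']
  | @insert a s ha ih =>
      rw [sq, Finset.prod_insert ha, ← sq, ih,
        show eK (insert a s) = Finsupp.single a 1 + eK s by rw [eK, Finset.sum_insert ha, ← eK],
        monomial_single_add, pow_one]

theorem eK_apply (K : Finset (Fin n)) (i : Fin n) : eK K i = if i ∈ K then 1 else 0 := by
  classical
  rw [eK, Finsupp.finset_sum_apply]
  simp [Finsupp.single_apply, Finset.sum_ite_eq']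

theorem eK_support (K : Finset (Fin n)) : (eK K).support = K := by
  ext i; simp [Finsupp.mem_support_iff, eK_apply]

theorem eK_degree (K : Finset (Fin n)) : (eK K).degree = K.card := by
  rw [Finsupp.degree_apply, eK_support]
  rw [Finset.card_eq_sum_ones]
  apply Finset.sum_congr rfl
  intro i hi; simp [eK_apply, hi]

theorem squarefree_eq (e : Fin n →₀ ℕ) (h : ∀ i, e i ≤ 1) : e = eK e.support := by
  ext i
  rw [eK_apply]
  by_cases hi : i ∈ e.support
  · have h1 : e i ≠ 0 := Finsupp.mem_support_iff.1 hi
    have := h i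
    simp only [hi, if_true]; omega
  · simp only [hi, if_false]
    simpa [Finsupp.mem_support_iff, not_not] using hi

theorem degree_support_card (e : Fin n →₀ ℕ) : e.support.card ≤ e.degree := by
  rw [Finsupp.degree, Finset.card_eq_sum_ones]
  apply Finset.sum_le_sum
  intro i hi
  have : e i ≠ 0 := Finsupp.mem_support_iff.1 hi
  omega



variable {n : ℕ}

noncomputable def fP (M : Matrix (Fin n) (Fin n) ℚ) (i : Fin n) : MvPolynomial (Fin n) ℚ :=
  ∑ j, C (M i j) * X i * X j

noncomputable def pP (M : Matrix (Fin n) (Fin n) ℚ) (b : Fin n → ℚ) (i : Fin n) :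
    MvPolynomial (Fin n) ℚ := fP M i - C (b i) * X i

theorem sub_single_add (m : Fin n →₀ ℕ) (i : Fin n) (h : m i ≠ 0) :
    m - Finsupp.single i 1 + Finsupp.single i 1 = m := by
  apply Finsupp.ext
  intro a
  simp only [Finsupp.add_apply, Finsupp.tsub_apply, Finsupp.single_apply]
  split_ifs with hia
  · have : m a ≠ 0 := hia ▸ h
    omega
  · omega

theorem mul_fP (M : Matrix (Fin n) (Fin n) ℚ) (m : Fin n →₀ ℕ) (i : Fin n) (h : m i ≠ 0) :
    (monomial (m - Finsupp.single i 1) 1 : MvPolynomial (Fin n) ℚ) * fP M i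
      = ∑ j, monomial (m + Finsupp.single j 1) (M i j) := by
  rw [fP, Finset.mul_sum]
  apply Finset.sum_congr rfl
  intro j _
  rw [C_apply, X, X, monomial_mul, monomial_mul, monomial_mul]
  congr 1
  · simp only [zero_add, ← add_assoc]
    rw [sub_single_add m i h]
  · ring

theorem mul_X (m : Fin n →₀ ℕ) (i : Fin n) (h : m i ≠ 0) (c : ℚ) :
    (monomial (m - Finsupp.single i 1) 1 : MvPolynomial (Fin n) ℚ) * (C c * X i)
      = c • monomial m 1 := by
  rw [C_apply, X, monomial_mul, monomial_mul, smul_monomial]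
  congr 1
  · simp only [zero_add, ← add_assoc]
    rw [sub_single_add m i h]
  · simp


variable {M : Matrix (Fin n) (Fin n) ℚ}

noncomputable def NN (M : Matrix (Fin n) (Fin n) ℚ) (b : Fin n → ℚ) (D : ℕ) :
    Submodule ℚ (MvPolynomial (Fin n) ℚ) :=
  (Ideal.span (Set.range (pP M b))).restrictScalars ℚ ⊔
    Submodule.span ℚ (Set.range fun K : {K : Finset (Fin n) // K.card ≤ D} => sq K.1)

theorem NN_mono {b : Fin n → ℚ} {D D' : ℕ} (h : D ≤ D') : NN M b D ≤ NN M b D' := by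
  apply sup_le le_sup_left
  refine le_trans (Submodule.span_le.2 ?_) le_sup_right
  rintro x ⟨K, rfl⟩
  exact Submodule.subset_span ⟨⟨K.1, K.2.trans h⟩, rfl⟩

theorem ideal_mem_NN {b : Fin n → ℚ} {D : ℕ} {x : MvPolynomial (Fin n) ℚ}
    (hx : x ∈ Ideal.span (Set.range (pP M b))) : x ∈ NN M b D :=
  Submodule.mem_sup_left hx

theorem sq_mem_NN {b : Fin n → ℚ} {D : ℕ} {K : Finset (Fin n)} (h : K.card ≤ D) :
    sq K ∈ NN M b D :=
  Submodule.mem_sup_right (Submodule.subset_span ⟨⟨K, h⟩, rfl⟩)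

theorem red_monomial (hM : ∀ v : Fin n → ℚ, v ≠ 0 → ∑ i, ∑ j, M i j * v i * v j ≠ 0)
    (b : Fin n → ℚ) :
    ∀ N : ℕ, ∀ e : Fin n →₀ ℕ, (n + 1) * e.degree + (n - e.support.card) ≤ N →
      (monomial e 1 : MvPolynomial (Fin n) ℚ) ∈ NN M b e.degree := by
  intro N
  induction N using Nat.strong_induction_on with
  | _ N ih =>
  intro e hN
  by_cases hsf : ∀ i, e i ≤ 1
  · rw [squarefree_eq e hsf, ← sq_eq, eK_degree]
    exact sq_mem_NN le_rfl
  · push_neg at hsf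
    obtain ⟨k, hk⟩ := hsf
    set T := e.support with hT
    have hkT : k ∈ T := Finsupp.mem_support_iff.2 (by omega)
    set m := e - Finsupp.single k 1 with hm
    have hmk : m k ≠ 0 := by
      have : m k = e k - 1 := by simp [hm, Finsupp.single_apply]
      omega
    have hsupp : m.support = T := by
      ext a
      simp only [Finsupp.mem_support_iff, hm, Finsupp.tsub_apply, Finsupp.single_apply, hT]
      split_ifs with hka
      · subst hka; omega
      · omega
    have hmem : ∀ i ∈ T, m i ≠ 0 := by
      intro i hi; rw [← hsupp] at hi; exact Finsupp.mem_support_iff.1 hi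
    have he : m + Finsupp.single k 1 = e := sub_single_add e k (by omega)
    have hdeg : e.degree = m.degree + 1 := by
      rw [← he, degE_add, degE_single]
    obtain ⟨Cm, hleft, hright⟩ := exists_inv M hM T
    have step1 : ∀ i ∈ T,
        (monomial (m - Finsupp.single i 1) 1 : MvPolynomial (Fin n) ℚ) * fP M i
          = monomial (m - Finsupp.single i 1) 1 * pP M b i + (b i) • monomial m 1 := by
      intro i hi
      rw [pP, mul_sub, mul_X m i (hmem i hi) (b i)]
      ring
    have lhs1 : ∑ i ∈ T, Cm k i • ((monomial (m - Finsupp.single i 1) 1 :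
          MvPolynomial (Fin n) ℚ) * fP M i)
        = ∑ j, (∑ i ∈ T, Cm k i * M i j) • monomial (m + Finsupp.single j 1) 1 := by
      rw [Finset.sum_congr rfl fun i hi => by rw [mul_fP M m i (hmem i hi)]]
      rw [Finset.sum_congr rfl fun i (hi : i ∈ T) => Finset.smul_sum]
      rw [Finset.sum_comm]
      apply Finset.sum_congr rfl
      intro j _
      rw [Finset.sum_smul]
      apply Finset.sum_congr rfl
      intro i _
      rw [smul_monomial, smul_monomial, smul_eq_mul, smul_eq_mul, mul_one]
    have lhs2 : ∑ i ∈ T, Cm k i • ((monomial (m - Finsupp.single i 1) 1 :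
          MvPolynomial (Fin n) ℚ) * fP M i)
        = (∑ i ∈ T, Cm k i • (monomial (m - Finsupp.single i 1) 1 * pP M b i))
          + (∑ i ∈ T, Cm k i * b i) • monomial m 1 := by
      rw [Finset.sum_congr rfl fun i hi => by rw [step1 i hi]]
      simp only [smul_add, smul_smul]
      rw [Finset.sum_add_distrib, ← Finset.sum_smul]
    have hTsum : ∑ j ∈ T, (∑ i ∈ T, Cm k i * M i j) • (monomial (m + Finsupp.single j 1)
          (1 : ℚ)) = monomial e 1 := by
      rw [Finset.sum_congr rfl fun j hj => by rw [hleft k hkT j hj]]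
      simp only [ite_smul, one_smul, zero_smul]
      rw [Finset.sum_ite_eq T k, if_pos hkT, he]
    have main : (monomial e 1 : MvPolynomial (Fin n) ℚ)
        = (∑ i ∈ T, Cm k i • (monomial (m - Finsupp.single i 1) 1 * pP M b i))
          + (∑ i ∈ T, Cm k i * b i) • monomial m 1
          - ∑ j ∈ Tᶜ, (∑ i ∈ T, Cm k i * M i j) • monomial (m + Finsupp.single j 1) 1 := by
      rw [eq_sub_iff_add_eq, ← hTsum, Finset.sum_add_sum_compl, ← lhs1, lhs2]
    -- arithmetic facts
    have hd2 : 2 ≤ e.degree := le_trans (by omega) (Finsupp.le_degree k e)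
    have hdeg' : e.degree = m.degree + 1 := hdeg
    have hcard : T.card ≤ n := le_trans (Finset.card_le_card (Finset.subset_univ T))
      (by simp)
    rw [main]
    apply Submodule.sub_mem
    · apply Submodule.add_mem
      · apply Submodule.sum_mem
        intro i _
        exact Submodule.smul_mem _ _ (ideal_mem_NN
          (Ideal.mul_mem_left _ _ (Ideal.subset_span ⟨i, rfl⟩)))
      · apply Submodule.smul_mem
        have harith : (n + 1) * m.degree + (n - m.support.card) ≤ N - 1 ∧ N - 1 < N := by
          rw [hsupp]
          rw [hdeg'] at hN
          have hexp : (n + 1) * (m.degree + 1) = (n + 1) * m.degree + (n + 1) := by ring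
          rw [hexp] at hN
          generalize (n + 1) * m.degree = P at hN ⊢
          omega
        have hmm := ih (N - 1) harith.2 m harith.1
        exact NN_mono (by omega) hmm
    · apply Submodule.sum_mem
      intro j hj
      have hjT : j ∉ T := Finset.mem_compl.1 hj
      apply Submodule.smul_mem
      have hsupp' : (m + Finsupp.single j 1).support = insert j T := by
        ext a
        simp only [Finsupp.mem_support_iff, Finsupp.add_apply, Finsupp.single_apply,
          Finset.mem_insert]
        rcases eq_or_ne j a with rfl | hne
        · simp
        · simp only [if_neg hne, add_zero]
          rw [← hsupp]
          simp [Finsupp.mem_support_iff, Ne.symm hne]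
      have hdegj : (m + Finsupp.single j 1).degree = e.degree := by
        rw [degE_add, degE_single, hdeg']
      have hcard' : (insert j T).card = T.card + 1 := Finset.card_insert_of_notMem hjT
      have hTn : T.card < n := by
        have : T ⊂ Finset.univ := Finset.ssubset_univ_iff.2 (by
          intro hTu
          exact hjT (hTu ▸ Finset.mem_univ j))
        have := Finset.card_lt_card this
        simpa using this
      have harith : (n + 1) * (m + Finsupp.single j 1).degree
          + (n - (m + Finsupp.single j 1).support.card) ≤ N - 1 ∧ N - 1 < N := by
        rw [hsupp', hcard', hdegj]
        have h2 : 1 ≤ (n+1) * e.degree := by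
          have h3 : 1 * 1 ≤ (n+1) * e.degree := Nat.mul_le_mul (by omega) (by omega)
          simpa using h3
        generalize (n + 1) * e.degree = P at hN h2 ⊢
        omega
      have hmm := ih (N - 1) harith.2 _ harith.1
      rw [hdegj] at hmm
      exact hmm

theorem red (hM : ∀ v : Fin n → ℚ, v ≠ 0 → ∑ i, ∑ j, M i j * v i * v j ≠ 0)
    (b : Fin n → ℚ) (φ : MvPolynomial (Fin n) ℚ) {D : ℕ} (h : φ.totalDegree ≤ D) :
    φ ∈ NN M b D := by
  rw [← support_sum_monomial_coeff φ]
  apply Submodule.sum_mem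
  intro e he
  have h1 : (monomial e (coeff e φ) : MvPolynomial (Fin n) ℚ)
      = (coeff e φ) • monomial e 1 := by
    rw [smul_monomial, smul_eq_mul, mul_one]
  rw [h1]
  apply Submodule.smul_mem
  have hde : e.degree ≤ D := le_trans (le_totalDegree he) h
  exact NN_mono hde (red_monomial hM b _ e le_rfl)

theorem degE_le_of_add {u v e : Fin n →₀ ℕ} (h : u + v = e) :
    u.degree ≤ e.degree ∧ v.degree ≤ e.degree := by
  constructor <;> (rw [← h, degE_add]; omega)

theorem comp_mul {q f : MvPolynomial (Fin n) ℚ} (hf : f.IsHomogeneous 2) (d : ℕ) :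
    homogeneousComponent (d + 2) (q * f) = homogeneousComponent d q * f := by
  apply MvPolynomial.ext
  intro e
  rw [coeff_homogeneousComponent, coeff_mul, coeff_mul]
  have key : ∀ uv ∈ Finset.HasAntidiagonal.antidiagonal e,
      coeff (Prod.fst uv) (homogeneousComponent d q) * coeff (Prod.snd uv) f
        = if e.degree = d + 2 then coeff (Prod.fst uv) q * coeff (Prod.snd uv) f else 0 := by
    intro uv huv
    have hsum : uv.1 + uv.2 = e := Finset.HasAntidiagonal.mem_antidiagonal.1 huv
    rw [coeff_homogeneousComponent]
    by_cases hv : coeff uv.2 f = 0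
    · simp [hv]
    · have hdv : uv.2.degree = 2 := by
        by_contra hne
        exact hv (hf.coeff_eq_zero hne)
      have hdegsum : uv.1.degree + 2 = e.degree := by
        rw [← hdv, ← degE_add, hsum]
      by_cases hu : uv.1.degree = d
      · rw [if_pos hu]
        have : e.degree = d + 2 := by omega
        rw [if_pos this]
      · rw [if_neg hu]
        have : e.degree ≠ d + 2 := by omega
        rw [if_neg this, zero_mul]
  rw [Finset.sum_congr rfl key]
  by_cases hE : e.degree = d + 2
  · simp [hE]
  · simp [hE]

theorem comp_low {q f : MvPolynomial (Fin n) ℚ} (hf : f.IsHomogeneous 2) {d : ℕ}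
    (hd : d < 2) : homogeneousComponent d (q * f) = 0 := by
  apply MvPolynomial.ext
  intro e
  rw [coeff_homogeneousComponent, coeff_zero]
  by_cases hE : e.degree = d
  · rw [if_pos hE, coeff_mul]
    apply Finset.sum_eq_zero
    intro uv huv
    have hsum : uv.1 + uv.2 = e := Finset.HasAntidiagonal.mem_antidiagonal.1 huv
    by_cases hv : coeff uv.2 f = 0
    · simp [hv]
    · have hdv : uv.2.degree = 2 := by
        by_contra hne
        exact hv (hf.coeff_eq_zero hne)
      have := (degE_le_of_add hsum).2
      omega
  · rw [if_neg hE]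

theorem fP_hom (M : Matrix (Fin n) (Fin n) ℚ) (i : Fin n) : (fP M i).IsHomogeneous 2 := by
  apply IsHomogeneous.sum
  intro j _
  have h1 : (C (M i j) * X i * X j : MvPolynomial (Fin n) ℚ).IsHomogeneous (0 + 1 + 1) :=
    ((isHomogeneous_C _ _).mul (isHomogeneous_X _ _)).mul (isHomogeneous_X _ _)
  simpa using h1

theorem totalDegree_hc_le (d : ℕ) (q : MvPolynomial (Fin n) ℚ) :
    (homogeneousComponent d q).totalDegree ≤ d := by
  apply Finset.sup_le
  intro e he
  have : coeff e (homogeneousComponent d q) ≠ 0 := Finsupp.mem_support_iff.1 he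
  rw [coeff_homogeneousComponent] at this
  by_cases hE : e.degree = d
  · rw [← hE]; rfl
  · simp [hE] at this

theorem hc_sq (d : ℕ) (K : Finset (Fin n)) :
    homogeneousComponent d (sq K) = if K.card = d then sq K else 0 := by
  rw [sq_eq]
  apply MvPolynomial.ext
  intro e
  rw [coeff_homogeneousComponent]
  by_cases hK : K.card = d
  · rw [if_pos hK]
    by_cases heK : eK K = e
    · have hEd : e.degree = d := by rw [← heK, eK_degree, hK]
      rw [if_pos hEd]
    · have h0 : coeff e ((monomial (eK K)) (1 : ℚ)) = 0 := by rw [coeff_monomial, if_neg heK]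
      rw [h0, ite_self]
  · rw [if_neg hK]
    rw [coeff_zero]
    by_cases hE : e.degree = d
    · rw [if_pos hE, coeff_monomial]
      by_cases heK : eK K = e
      · exfalso; apply hK; rw [← heK] at hE; rw [← hE, eK_degree]
      · rw [if_neg heK]
    · rw [if_neg hE]

theorem exists_good (M : Matrix (Fin n) (Fin n) ℚ)
    (hM : ∀ v : Fin n → ℚ, v ≠ 0 → ∑ i, ∑ j, M i j * v i * v j ≠ 0) :
    ∃ b : Fin n → ℚ, ∀ c : Finset (Fin n) → ℚ,
      (∑ K, c K • sq K) ∈ Ideal.span (Set.range (pP M b)) → ∀ K, c K = 0 := by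
  classical
  choose Cm hleft hright using exists_inv M hM
  have hrow : ∀ K : Finset (Fin n), ∀ i ∈ K, ∃ j ∈ K, Cm K i j ≠ 0 := by
    intro K i hi
    by_contra hno
    push_neg at hno
    have h1 := hleft K i hi i hi
    rw [Finset.sum_eq_zero (fun j hj => by rw [hno j hj, zero_mul])] at h1
    simp at h1
  set Lin : Finset (Fin n) → Fin n → MvPolynomial (Fin n) ℚ :=
    fun K i => ∑ j ∈ K, C (Cm K i j) * X j with hLin
  have hLne : ∀ K : Finset (Fin n), ∀ i ∈ K, Lin K i ≠ 0 := by
    intro K i hi h0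
    obtain ⟨j0, hj0, hne⟩ := hrow K i hi
    have heval := congrArg (eval fun a => if a = j0 then (1 : ℚ) else 0) h0
    simp only [hLin, map_sum, map_mul, eval_C, eval_X, map_zero] at heval
    rw [Finset.sum_congr rfl (fun j _ => by rw [mul_ite, mul_one, mul_zero])] at heval
    rw [Finset.sum_ite_eq' K j0 (fun j => Cm K i j), if_pos hj0] at heval
    exact hne heval
  have hPne : (∏ K : Finset (Fin n), ∏ i ∈ K, Lin K i) ≠ 0 := by
    rw [Finset.prod_ne_zero_iff]
    intro K _
    rw [Finset.prod_ne_zero_iff]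
    intro i hi
    exact hLne K i hi
  obtain ⟨b, hb⟩ : ∃ b : Fin n → ℚ, eval b (∏ K : Finset (Fin n), ∏ i ∈ K, Lin K i) ≠ 0 := by
    by_contra hall
    push_neg at hall
    apply hPne
    apply MvPolynomial.funext
    intro x
    rw [hall x, map_zero]
  have hbK : ∀ K : Finset (Fin n), ∀ i ∈ K, ∑ j ∈ K, Cm K i j * b j ≠ 0 := by
    intro K i hi
    rw [map_prod] at hb
    have h2 := Finset.prod_ne_zero_iff.1 hb K (Finset.mem_univ K)
    rw [map_prod] at h2
    have h3 := Finset.prod_ne_zero_iff.1 h2 i hi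
    simpa [hLin] using h3
  set z : Finset (Fin n) → Fin n → ℚ :=
    fun K i => if i ∈ K then ∑ j ∈ K, Cm K i j * b j else 0 with hz
  have hz0 : ∀ K i, i ∉ K → z K i = 0 := by
    intro K i hi; rw [hz]; simp [hi]
  have hzne : ∀ K, ∀ i ∈ K, z K i ≠ 0 := by
    intro K i hi; rw [hz]; simp only [if_pos hi]; exact hbK K i hi
  have hevp : ∀ (K : Finset (Fin n)) (i : Fin n), eval (z K) (pP M b i) = 0 := by
    intro K i
    rw [pP, fP]
    simp only [map_sub, map_sum, map_mul, eval_C, eval_X]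
    by_cases hi : i ∈ K
    · have hMz : ∑ j, M i j * z K i * z K j = z K i * b i := by
        rw [Finset.sum_congr rfl fun j _ => show M i j * z K i * z K j
          = z K i * (M i j * z K j) by ring, ← Finset.mul_sum]
        congr 1
        rw [← Finset.sum_subset (Finset.subset_univ K)
          (fun j _ hj => by rw [hz0 K j hj, mul_zero])]
        have h2 : ∀ j ∈ K, M i j * z K j = ∑ l ∈ K, M i j * Cm K j l * b l := by
          intro j hj
          rw [hz]
          simp only [if_pos hj]
          rw [Finset.mul_sum]
          apply Finset.sum_congr rfl
          intro l _
          ring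
        rw [Finset.sum_congr rfl h2, Finset.sum_comm]
        have h3 : ∀ l ∈ K, ∑ j ∈ K, M i j * Cm K j l * b l = (if i = l then 1 else 0) * b l := by
          intro l hl
          rw [← Finset.sum_mul, hright K i hi l hl]
        rw [Finset.sum_congr rfl h3]
        simp only [ite_mul, one_mul, zero_mul]
        rw [Finset.sum_ite_eq K i, if_pos hi]
      rw [hMz]
      ring
    · have h0 : z K i = 0 := hz0 K i hi
      simp [h0]
  have hker : ∀ K : Finset (Fin n),
      Ideal.span (Set.range (pP M b)) ≤ RingHom.ker (eval (z K)) := by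
    intro K
    rw [Ideal.span_le]
    rintro x ⟨i, rfl⟩
    simp only [SetLike.mem_coe, RingHom.mem_ker]
    exact hevp K i
  have htri0 : ∀ (K Lf : Finset (Fin n)), ¬ K ⊆ Lf → (∏ i ∈ K, z Lf i) = 0 := by
    intro K Lf hsub
    obtain ⟨i, hiK, hiL⟩ := Finset.not_subset.1 hsub
    exact Finset.prod_eq_zero hiK (hz0 Lf i hiL)
  have htri1 : ∀ Lf : Finset (Fin n), (∏ i ∈ Lf, z Lf i) ≠ 0 :=
    fun Lf => Finset.prod_ne_zero_iff.2 fun i hi => hzne Lf i hi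
  refine ⟨b, ?_⟩
  intro c hc
  have heq : ∀ Lf : Finset (Fin n), ∑ K, c K * ∏ i ∈ K, z Lf i = 0 := by
    intro Lf
    have h1 : eval (z Lf) (∑ K, c K • sq K) = 0 := by
      have := hker Lf hc
      rwa [RingHom.mem_ker] at this
    rw [map_sum] at h1
    have h2 : ∀ K : Finset (Fin n), eval (z Lf) (c K • sq K) = c K * ∏ i ∈ K, z Lf i := by
      intro K
      rw [smul_eq_C_mul, map_mul, eval_C, sq, map_prod]
      simp only [eval_X]
    rwa [Finset.sum_congr rfl fun K _ => h2 K] at h1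
  intro K0
  suffices h : ∀ N : ℕ, ∀ Kc : Finset (Fin n), Kc.card = N → c Kc = 0 by exact h _ K0 rfl
  intro N
  induction N using Nat.strong_induction_on with
  | _ N ih =>
  intro Kc hKc
  have h1 := heq Kc
  rw [← Finset.add_sum_erase _ _ (Finset.mem_univ Kc)] at h1
  have h3 : ∑ K ∈ Finset.univ.erase Kc, c K * ∏ i ∈ K, z Kc i = 0 := by
    apply Finset.sum_eq_zero
    intro K hK
    have hKne : K ≠ Kc := (Finset.mem_erase.1 hK).1
    by_cases hsub : K ⊆ Kc
    · have hlt : K.card < N := by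
        rw [← hKc]
        exact Finset.card_lt_card (hsub.ssubset_of_ne hKne)
      rw [ih K.card hlt K rfl, zero_mul]
    · rw [htri0 K Kc hsub, mul_zero]
  rw [h3, add_zero] at h1
  exact (mul_eq_zero.1 h1).resolve_right (htri1 Kc)

theorem main_indep (M : Matrix (Fin n) (Fin n) ℚ)
    (hM : ∀ v : Fin n → ℚ, v ≠ 0 → ∑ i, ∑ j, M i j * v i * v j ≠ 0)
    (c : Finset (Fin n) → ℚ)
    (hc : (∑ K, c K • sq K) ∈ Ideal.span (Set.range (fP M))) : ∀ K, c K = 0 := by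
  classical
  obtain ⟨b, hb⟩ := exists_good M hM
  rw [Ideal.mem_span_range_iff_exists_fun] at hc
  obtain ⟨q, hq⟩ := hc
  intro K0
  set d := K0.card with hd
  have hcomp := congrArg (homogeneousComponent d) hq
  rw [map_sum, map_sum] at hcomp
  have hR : ∑ K : Finset (Fin n), homogeneousComponent d (c K • sq K)
      = ∑ K : Finset (Fin n), (if K.card = d then c K else 0) • sq K := by
    apply Finset.sum_congr rfl
    intro K _
    rw [map_smul, hc_sq]
    by_cases h : K.card = d
    · rw [if_pos h, if_pos h]
    · rw [if_neg h, if_neg h, smul_zero, zero_smul]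
  rw [hR] at hcomp
  set c' : Finset (Fin n) → ℚ := fun K => if K.card = d then c K else 0 with hc'
  by_cases hd2 : d < 2
  · have hL : ∀ i, homogeneousComponent d (q i * fP M i) = 0 :=
      fun i => comp_low (fP_hom M i) hd2
    rw [Finset.sum_congr rfl fun i _ => hL i, Finset.sum_const, smul_zero] at hcomp
    have h0 : (∑ K : Finset (Fin n), c' K • sq K) ∈ Ideal.span (Set.range (pP M b)) := by
      rw [← hcomp]
      exact Ideal.zero_mem _
    have := hb c' h0 K0
    simpa [hc', hd] using this
  · push_neg at hd2
    have hdeq : d - 2 + 2 = d := by omega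
    have hL : ∀ i : Fin n, homogeneousComponent d (q i * fP M i)
        = homogeneousComponent (d - 2) (q i) * fP M i := by
      intro i
      have h1 := comp_mul (q := q i) (fP_hom M i) (d - 2)
      rwa [hdeq] at h1
    rw [Finset.sum_congr rfl fun i _ => hL i] at hcomp
    set q' : Fin n → MvPolynomial (Fin n) ℚ := fun i => homogeneousComponent (d - 2) (q i)
      with hq'
    have hfp : ∀ i, fP M i = pP M b i + C (b i) * X i := by
      intro i
      rw [pP]
      ring
    have hsplit : ∑ i, q' i * fP M i
        = (∑ i, q' i * pP M b i) + ∑ i, q' i * (C (b i) * X i) := by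
      rw [← Finset.sum_add_distrib]
      apply Finset.sum_congr rfl
      intro i _
      rw [hfp i]
      ring
    set r : MvPolynomial (Fin n) ℚ := ∑ i, q' i * (C (b i) * X i) with hr
    have hrdeg : r.totalDegree ≤ d - 1 := by
      refine le_trans (totalDegree_finset_sum _ _) (Finset.sup_le ?_)
      intro i _
      refine le_trans (totalDegree_mul _ _) ?_
      have h1 : (q' i).totalDegree ≤ d - 2 := totalDegree_hc_le _ _
      have h2 : (C (b i) * X i : MvPolynomial (Fin n) ℚ).totalDegree ≤ 1 := by
        refine le_trans (totalDegree_mul _ _) ?_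
        rw [totalDegree_C, totalDegree_X]
      omega
    have hrN : r ∈ NN M b (d - 1) := red hM b r hrdeg
    rw [NN, Submodule.mem_sup] at hrN
    obtain ⟨y, hy, s, hs, hys⟩ := hrN
    rw [Submodule.mem_span_range_iff_exists_fun] at hs
    obtain ⟨w, hw⟩ := hs
    set w' : Finset (Fin n) → ℚ :=
      fun K => if h : K.card ≤ d - 1 then w ⟨K, h⟩ else 0 with hw'
    have hws : ∑ K : Finset (Fin n), w' K • sq K = s := by
      rw [← hw]
      rw [← Finset.sum_filter_of_ne (p := fun K : Finset (Fin n) => K.card ≤ d - 1)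
        (by
          intro K _ hne
          by_contra hcard
          apply hne
          simp only [hw', dif_neg hcard, zero_smul])]
      rw [Finset.sum_subtype (p := fun K : Finset (Fin n) => K.card ≤ d - 1)
        (Finset.univ.filter fun K : Finset (Fin n) => K.card ≤ d - 1)
        (by intro K; simp) (fun K => w' K • sq K)]
      apply Finset.sum_congr rfl
      intro k _
      simp only [hw', dif_pos k.2]
    have hmem : (∑ K : Finset (Fin n), (c' K - w' K) • sq K)
        ∈ Ideal.span (Set.range (pP M b)) := by
      have hsd : ∑ K : Finset (Fin n), (c' K - w' K) • sq K
          = (∑ K : Finset (Fin n), c' K • sq K) - ∑ K : Finset (Fin n), w' K • sq K := by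
        rw [← Finset.sum_sub_distrib]
        apply Finset.sum_congr rfl
        intro K _
        rw [sub_smul]
      rw [hsd, hws, ← hcomp, hsplit]
      have hyJ : y ∈ Ideal.span (Set.range (pP M b)) := hy
      have : (∑ i, q' i * pP M b i) + ∑ i, q' i * (C (b i) * X i) - s
          = (∑ i, q' i * pP M b i) + y := by
        rw [← hr, ← hys]
        ring
      rw [this]
      apply Ideal.add_mem
      · apply Ideal.sum_mem
        intro i _
        exact Ideal.mul_mem_left _ _ (Ideal.subset_span ⟨i, rfl⟩)
      · exact hyJ
    have hfin := hb _ hmem K0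
    have h1 : c' K0 = c K0 := by
      simp [hc', hd]
    have h2 : w' K0 = 0 := by
      have hKd : ¬ K0.card ≤ d - 1 := by omega
      simp only [hw', dif_neg hKd]
    rw [h1, h2, sub_zero] at hfin
    exact hfin

end PetAux


open PetAux in
/-- Rational-coefficient version: if `A` is an `n × n` integer matrix whose associated real
quadratic form is positive definite, and `J̌_ℚ ⊆ ℚ[x_1, …, x_n]` is the ideal generated by the
quadrics `f i = ∑ j, A i j * x i * x j`, then the images of the `2 ^ n` square-free monomials
`∏ i ∈ K, x i` form a `ℚ`-basis of the quotient; in particular the quotient has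
`ℚ`-dimension `2 ^ n`. -/
theorem squarefree_monomials_basis_quotient_quadrics_rat
    (n : ℕ) (hn : 1 ≤ n) (A : Matrix (Fin n) (Fin n) ℤ)
    (hA : ∀ v : Fin n → ℝ, v ≠ 0 → 0 < ∑ i, ∑ j, (A i j : ℝ) * v i * v j)
    (J : Ideal (MvPolynomial (Fin n) ℚ))
    (hJ : J = Ideal.span (Set.range fun i : Fin n => ∑ j, C (A i j : ℚ) * X i * X j)) :
    (∃ b : Module.Basis (Finset (Fin n)) ℚ (MvPolynomial (Fin n) ℚ ⧸ J),
        ∀ K : Finset (Fin n), b K = Ideal.Quotient.mk J (∏ i ∈ K, X i)) ∧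
      Module.finrank ℚ (MvPolynomial (Fin n) ℚ ⧸ J) = 2 ^ n := by
  classical
  set M : Matrix (Fin n) (Fin n) ℚ := fun i j => (A i j : ℚ) with hMdef
  have hM : ∀ v : Fin n → ℚ, v ≠ 0 → ∑ i, ∑ j, M i j * v i * v j ≠ 0 := by
    intro v hv h0
    have hvR : (fun i => (v i : ℝ)) ≠ 0 := by
      intro h
      apply hv
      funext i
      have h1 := congrFun h i
      simpa using h1
    have hpos := hA _ hvR
    have hcast : ((∑ i, ∑ j, M i j * v i * v j : ℚ) : ℝ)
        = ∑ i, ∑ j, (A i j : ℝ) * (v i : ℝ) * (v j : ℝ) := by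
      push_cast [hMdef]
      rfl
    rw [h0] at hcast
    rw [← hcast] at hpos
    simp at hpos
  have hJf : J = Ideal.span (Set.range (fP M)) := hJ
  have hpP0 : pP M 0 = fP M := by
    funext i
    rw [pP]
    simp
  have hsmul : ∀ (cc : ℚ) (p : MvPolynomial (Fin n) ℚ),
      Ideal.Quotient.mk J (cc • p) = cc • Ideal.Quotient.mk J p := by
    intro cc p
    exact Submodule.Quotient.mk_smul J cc p
  set vb : Finset (Fin n) → (MvPolynomial (Fin n) ℚ ⧸ J) :=
    fun K => Ideal.Quotient.mk J (sq K) with hvb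
  have hLI : LinearIndependent ℚ vb := by
    rw [Fintype.linearIndependent_iff]
    intro c hsum
    apply main_indep M hM c
    have hmem : ∑ K, c K • sq K ∈ J := by
      rw [← Ideal.Quotient.eq_zero_iff_mem, map_sum,
        Finset.sum_congr rfl fun K _ => hsmul (c K) (sq K)]
      exact hsum
    rw [hJf] at hmem
    exact hmem
  have hSP : ⊤ ≤ Submodule.span ℚ (Set.range vb) := by
    rintro x -
    obtain ⟨φ, rfl⟩ := Ideal.Quotient.mk_surjective x
    set D := φ.totalDegree with hD
    have hred : φ ∈ NN M 0 D := red hM 0 φ hD.ge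
    rw [NN, Submodule.mem_sup] at hred
    obtain ⟨y, hy, s, hs, hys⟩ := hred
    have hyJ : y ∈ J := by
      rw [hJf, ← hpP0]
      exact hy
    rw [Submodule.mem_span_range_iff_exists_fun] at hs
    obtain ⟨w, hw⟩ := hs
    have hx : Ideal.Quotient.mk J φ
        = ∑ k : {K : Finset (Fin n) // K.card ≤ D}, w k • vb k.1 := by
      rw [← hys, map_add, Ideal.Quotient.eq_zero_iff_mem.2 hyJ, zero_add, ← hw, map_sum]
      apply Finset.sum_congr rfl
      intro k _
      rw [hsmul]
    rw [hx]
    apply Submodule.sum_mem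
    intro k _
    exact Submodule.smul_mem _ _ (Submodule.subset_span ⟨k.1, rfl⟩)
  refine ⟨⟨Module.Basis.mk hLI hSP, ?_⟩, ?_⟩
  · intro K
    rw [Module.Basis.mk_apply]
    rfl
  · rw [Module.finrank_eq_card_basis (Module.Basis.mk hLI hSP), Fintype.card_finset, Fintype.card_fin]
end

section
/- Let P be a root pairing over a field of characteristic zero (for instance, the root system of a complex semisimple Lie algebra), with roots α_k, reflections s_k, and Cartan integers a_{kl} = ⟨α_k, α_l^∨⟩, so that s_l(α_k) = α_k − a_{kl} α_l. Suppose i and j are indices with a_{ij} a_{ji} = 3 (the G₂ case, where s_i s_j has order 6). Then the following identity holds in the ambient vector space: α_i + (s_i ∘ s_j)(α_i) + (s_i ∘ s_j)^2(α_i) = 4 α_i − 2 a_{ij} α_j. -/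
/-- Key computation in Lemma 3.3 of the paper (the `G₂` case): in a root pairing over a
field of characteristic zero, with Cartan integers `a k l = ⟨α_k, α_l^∨⟩` (so that
`s_l (α_k) = α_k - a k l • α_l`), if `a i j * a j i = 3` then
`α_i + (s_i ∘ s_j)(α_i) + (s_i ∘ s_j)^2 (α_i) = 4 • α_i - (2 * a i j) • α_j`. -/
theorem rootPairing_billey_identity_G2
    {ι K M N : Type*} [Field K] [CharZero K]
    [AddCommGroup M] [Module K M] [AddCommGroup N] [Module K N]
    (P : RootPairing ι K M N) (i j : ι)
    (h : P.pairing i j * P.pairing j i = 3) :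
    P.root i + (P.reflection i * P.reflection j) (P.root i)
        + ((P.reflection i * P.reflection j) ^ 2) (P.root i) =
      (4 : K) • P.root i - (2 * P.pairing i j) • P.root j := by
  show P.root i + P.reflection i (P.reflection j (P.root i))
      + P.reflection i (P.reflection j (P.reflection i (P.reflection j (P.root i)))) = _
  simp only [RootPairing.reflection_apply_root, RootPairing.reflection_apply_self,
    map_sub, map_smul, map_add, map_neg, smul_sub, smul_add, smul_neg, smul_smul]
  simp only [RootPairing.pairing_same]; match_scalars
  · linear_combination (P.pairing i j * P.pairing j i + 1) * h
  · linear_combination (-P.pairing i j) * h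
end
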